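/- arXiv:2504.21653 — 6 statements merged into one kernel-verified Lean document; each statement's English description precedes it below -/
import Mathlib

section
/- Let T be a tournament and u, v distinct vertices with d⁺(u) ≥ d⁺(v). If there is an arc from v to u, then p₂(u,v) + p₂(v,u) ≥ 2·π₂(T) + |d⁺(u) − d⁺(v) + 1|, where π₂(T) is the minimum of p₂(x,y) over all ordered pairs of distinct vertices x, y. -/
open Finset

variable {V : Type*} [Fintype V] [DecidableEq V]

/-- A tournament: irreflexive, and between any two distinct vertices exactly one arc. -/
def IsTournament (r : V → V → Prop) : Prop :=
  (∀ u, ¬ r u u) ∧ ∀ u v : V, u ≠ v → Xor' (r u v) (r v u)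

/-- Out-degree. -/
def outDeg (r : V → V → Prop) [DecidableRel r] (u : V) : ℕ :=
  (Finset.univ.filter fun v => r u v).card

/-- In-degree. -/
def inDeg (r : V → V → Prop) [DecidableRel r] (u : V) : ℕ :=
  (Finset.univ.filter fun v => r v u).card

/-- Number of directed 2-paths from `u` to `v`. -/
def p2 (r : V → V → Prop) [DecidableRel r] (u v : V) : ℕ :=
  (Finset.univ.filter fun w => r u w ∧ r w v).card

/-- `π` is the minimum of `p2` over ordered pairs of distinct vertices. -/
def IsPi2 (r : V → V → Prop) [DecidableRel r] (π : ℕ) : Prop :=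
  (∀ x y : V, x ≠ y → π ≤ p2 r x y) ∧ ∃ x y : V, x ≠ y ∧ p2 r x y = π

/-- `i` is the irregularity: the maximum of |d⁺(u) − d⁻(u)|. -/
def IsIrreg (r : V → V → Prop) [DecidableRel r] (i : ℕ) : Prop :=
  (∀ u : V, ((outDeg r u : ℤ) - inDeg r u).natAbs ≤ i) ∧
    ∃ u : V, ((outDeg r u : ℤ) - inDeg r u).natAbs = i

/-- A directed path, as a duplicate-free list whose consecutive members are arcs. -/
def IsDirPath (r : V → V → Prop) (l : List V) : Prop :=
  l.Nodup ∧ l.Chain' r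

/-- A path is extendable if some path with the same endpoints uses its vertices plus one more. -/
def Extendable (r : V → V → Prop) (l : List V) : Prop :=
  ∃ w ∉ l.toFinset, ∃ l' : List V, IsDirPath r l' ∧ l'.head? = l.head? ∧
    l'.getLast? = l.getLast? ∧ l'.toFinset = insert w l.toFinset

/-- Every nonhamiltonian path (on at least two vertices) is extendable. -/
def PathExtendable (r : V → V → Prop) : Prop :=
  ∀ l : List V, IsDirPath r l → 2 ≤ l.length →
    l.toFinset ≠ Finset.univ → Extendable r l

theorem stmt3 (r : V → V → Prop) [DecidableRel r] (hT : IsTournament r)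
    (π : ℕ) (hπ : IsPi2 r π) (u v : V) (huv : u ≠ v)
    (hdeg : outDeg r v ≤ outDeg r u) (harc : r v u) :
    (2 * π : ℤ) + |(outDeg r u : ℤ) - outDeg r v + 1| ≤ (p2 r u v : ℤ) + p2 r v u := by

  obtain ⟨hirr, hxor⟩ := hT
  have hnuv : ¬ r u v := by
    rcases hxor v u huv.symm with ⟨_, h⟩ | ⟨_, h⟩
    · exact h
    · exact absurd harc h
  set C := univ.filter (fun w => r u w ∧ r v w) with hC
  have h1 : outDeg r u = p2 r u v + C.card := by
    unfold outDeg p2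
    rw [← Finset.card_filter_add_card_filter_not (p := fun w => r w v),
      Finset.filter_filter, Finset.filter_filter]
    congr 2
    ext w
    simp only [hC, mem_filter, mem_univ, true_and]
    constructor
    · rintro ⟨ha, hb⟩
      have hwv : w ≠ v := fun h => hnuv (h ▸ ha)
      rcases hxor w v hwv with ⟨h3, _⟩ | ⟨h3, _⟩
      · exact absurd h3 hb
      · exact ⟨ha, h3⟩
    · rintro ⟨ha, h3⟩
      refine ⟨ha, fun hb => ?_⟩
      rcases hxor w v (fun h => hirr v (h ▸ h3)) with ⟨_, h4⟩ | ⟨_, h4⟩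
      · exact h4 h3
      · exact h4 hb
  have h2 : outDeg r v = 1 + (p2 r v u + C.card) := by
    unfold outDeg p2
    rw [← Finset.card_filter_add_card_filter_not (p := fun w => r w u),
      Finset.filter_filter, Finset.filter_filter]
    have hins : univ.filter (fun w => r v w ∧ ¬ r w u) = insert u C := by
      ext w
      simp only [hC, mem_insert, mem_filter, mem_univ, true_and]
      constructor
      · rintro ⟨ha, hb⟩
        by_cases hwu : w = u
        · exact Or.inl hwu
        · rcases hxor u w (Ne.symm hwu) with ⟨h3, _⟩ | ⟨h3, _⟩
          · exact Or.inr ⟨h3, ha⟩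
          · exact absurd h3 hb
      · rintro (rfl | ⟨h3, h4⟩)
        · exact ⟨harc, hirr _⟩
        · refine ⟨h4, fun h => ?_⟩
          rcases hxor u w (fun he => hirr u (he ▸ h3)) with ⟨_, h5⟩ | ⟨_, h5⟩
          · exact h5 h
          · exact h5 h3
    rw [hins, Finset.card_insert_of_notMem (by simp [hC, hirr u])]
    omega
  have hmin : π ≤ p2 r v u := hπ.1 v u huv.symm
  rw [abs_of_nonneg (by omega : (0:ℤ) ≤ (outDeg r u : ℤ) - outDeg r v + 1)]
  omega
end

section
/- In any tournament T on n vertices with n ≥ 3, π₂(T) ≤ (n−3)/4, i.e., 4·π₂(T) ≤ n − 3. -/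
open Finset

variable {V : Type*} [Fintype V] [DecidableEq V]

set_option linter.unusedSectionVars false in
lemma tour_split (r : V → V → Prop) [DecidableRel r] (hT : IsTournament r)
    (s : Finset V) (y : V) :
    (s.filter fun w => r w y).card + (s.filter fun w => r y w).card = (s.erase y).card := by
  rw [← Finset.card_union_of_disjoint]
  · congr 1
    ext w
    simp only [Finset.mem_union, Finset.mem_filter, Finset.mem_erase]
    constructor
    · rintro (⟨hs, h⟩ | ⟨hs, h⟩) <;>
        exact ⟨fun he => hT.1 y (by simpa [he] using h), hs⟩
    · rintro ⟨hne, hs⟩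
      rcases hT.2 w y hne with ⟨h, -⟩ | ⟨h, -⟩
      · exact Or.inl ⟨hs, h⟩
      · exact Or.inr ⟨hs, h⟩
  · rw [Finset.disjoint_left]
    intro a ha hb
    simp only [Finset.mem_filter] at ha hb
    rcases eq_or_ne a y with rfl | hne
    · exact hT.1 a ha.2
    · rcases hT.2 a y hne with ⟨-, h⟩ | ⟨-, h⟩
      · exact h hb.2
      · exact h ha.2

theorem stmt4 (r : V → V → Prop) [DecidableRel r] (hT : IsTournament r)
    (hn : 3 ≤ Fintype.card V) (π : ℕ) (hπ : IsPi2 r π) :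
    4 * π ≤ Fintype.card V - 3 := by
  set n := Fintype.card V with hn'
  have hpos : 0 < n := by omega
  have hne : (Finset.univ : Finset V).Nonempty := Finset.card_pos.mp (by rw [Finset.card_univ]; omega)
  obtain ⟨x, -, hxmin⟩ := Finset.exists_min_image Finset.univ (outDeg r) hne
  set d := outDeg r x with hd
  -- every vertex has outDeg + inDeg = n - 1
  have hdeg : ∀ u : V, outDeg r u + inDeg r u = n - 1 := by
    intro u
    have h := tour_split r hT Finset.univ u
    rw [Finset.card_erase_of_mem (Finset.mem_univ u), Finset.card_univ] at h
    simp only [outDeg, inDeg, ← hn']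
    omega
  have hsum_eq : (∑ u : V, outDeg r u) = ∑ u : V, inDeg r u := by
    simp only [outDeg, inDeg, Finset.card_filter]
    exact Finset.sum_comm
  have h2d : 2 * d ≤ n - 1 := by
    have h1 : (∑ u : V, (outDeg r u + inDeg r u)) = n * (n - 1) := by
      simp [hdeg, Finset.sum_const, Finset.card_univ, mul_comm]
      exact Or.inl hn'.symm
    have h2 : n * (2 * d) ≤ n * (n - 1) := by
      have hs : (∑ _u : V, d) ≤ ∑ u : V, outDeg r u :=
        Finset.sum_le_sum fun u _ => hxmin u (Finset.mem_univ u)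
      have hsd : (∑ _u : V, d) = n * d := by
        simp [Finset.sum_const, Finset.card_univ, mul_comm, ← hn']
      have hsplit : (∑ u : V, (outDeg r u + inDeg r u))
          = (∑ u : V, outDeg r u) + ∑ u : V, inDeg r u := Finset.sum_add_distrib
      have e1 : n * (2 * d) = 2 * (n * d) := by ring
      omega
    exact Nat.le_of_mul_le_mul_left h2 hpos
  rcases Nat.eq_zero_or_pos d with hd0 | hd1
  · -- min outdegree 0 : p2 from x is 0
    obtain ⟨y, hy⟩ := Fintype.exists_ne_of_one_lt_card (by omega) x
    have hle : π ≤ p2 r x y := hπ.1 x y hy.symm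
    have : p2 r x y ≤ d := by
      apply Finset.card_le_card
      intro w hw
      simp only [p2, Finset.mem_filter] at hw
      simp only [outDeg, Finset.mem_filter]
      exact ⟨Finset.mem_univ w, hw.2.1⟩
    omega
  · set A := Finset.univ.filter (fun v => r x v) with hA
    have hAcard : A.card = d := rfl
    have hAne : A.Nonempty := Finset.card_pos.mp (by omega)
    obtain ⟨y, hyA, hymin⟩ :=
      Finset.exists_min_image A (fun z => (A.filter fun w => r w z).card) hAne
    have hsumA : (∑ z ∈ A, (A.filter fun w => r w z).card)
        = ∑ z ∈ A, (A.filter fun w => r z w).card := by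
      simp only [Finset.card_filter]
      exact Finset.sum_comm
    have hsum2 : 2 * (∑ z ∈ A, (A.filter fun w => r w z).card) = d * (d - 1) := by
      have h1 : (∑ z ∈ A, (A.filter fun w => r w z).card)
          + (∑ z ∈ A, (A.filter fun w => r z w).card) = d * (d - 1) := by
        rw [← Finset.sum_add_distrib,
          Finset.sum_congr rfl (fun z hz => by
            rw [tour_split r hT A z, Finset.card_erase_of_mem hz, hAcard]),
          Finset.sum_const, hAcard, smul_eq_mul]
      omega
    have hmin : d * (2 * (A.filter fun w => r w y).card) ≤ d * (d - 1) := by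
      calc d * (2 * (A.filter fun w => r w y).card)
          = 2 * ∑ _z ∈ A, (A.filter fun w => r w y).card := by
            rw [Finset.sum_const, hAcard]; ring
        _ ≤ 2 * ∑ z ∈ A, (A.filter fun w => r w z).card := by
            apply Nat.mul_le_mul_left
            exact Finset.sum_le_sum fun z hz => hymin z hz
        _ = d * (d - 1) := hsum2
    have hkey : 2 * (A.filter fun w => r w y).card ≤ d - 1 :=
      Nat.le_of_mul_le_mul_left hmin hd1
    have hxy : r x y := (Finset.mem_filter.mp hyA).2
    have hxney : x ≠ y := fun he => hT.1 x (he ▸ hxy)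
    have hp2 : p2 r x y = (A.filter fun w => r w y).card := by
      rw [hA, Finset.filter_filter]
      rfl
    have hle : π ≤ p2 r x y := hπ.1 x y hxney
    omega
end

section
/- Let T be a tournament and u a vertex of T. If every ordered pair of distinct vertices (x,y) of T admits at least k directed 2-paths from x to y, then d⁺(u) ≥ 2k + 1 (provided d⁺(u) ≥ 1), since the subtournament induced on N⁺(u) has minimum in-degree at least k. -/
open Finset

variable {V : Type*} [Fintype V] [DecidableEq V]

theorem stmt7 (r : V → V → Prop) [DecidableRel r] (hT : IsTournament r)
    (k : ℕ) (hk : ∀ x y : V, x ≠ y → k ≤ p2 r x y)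
    (u : V) (hu : 1 ≤ outDeg r u) :
    2 * k + 1 ≤ outDeg r u := by
  classical
  set S : Finset V := Finset.univ.filter fun v => r u v with hS
  have hn : outDeg r u = S.card := rfl
  -- each v in S has at least k in-neighbors within S
  have key : ∀ v ∈ S, k ≤ (S.filter fun w => r w v).card := by
    intro v hv
    have hruv : r u v := (Finset.mem_filter.mp hv).2
    have huv : u ≠ v := fun h => hT.1 u (h ▸ hruv)
    refine (hk u v huv).trans (Finset.card_le_card ?_)
    intro w hw
    simp only [p2, Finset.mem_filter, Finset.mem_univ, true_and, hS] at hw ⊢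
    exact ⟨hw.1, hw.2⟩
  have hsum : k * S.card ≤ ∑ v ∈ S, (S.filter fun w => r w v).card := by
    calc k * S.card = ∑ _v ∈ S, k := by rw [Finset.sum_const, smul_eq_mul, mul_comm]
      _ ≤ _ := Finset.sum_le_sum key
  have hdouble : 2 * ∑ v ∈ S, (S.filter fun w => r w v).card = S.card * (S.card - 1) := by
    have hexp : ∀ v, (S.filter fun w => r w v).card
        = ∑ w ∈ S, (if r w v then 1 else 0) := by
      intro v
      rw [Finset.sum_boole]
      simp
    have h1 : 2 * ∑ v ∈ S, (S.filter fun w => r w v).card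
        = ∑ v ∈ S, ∑ w ∈ S, ((if r w v then 1 else 0) + (if r v w then 1 else 0)) := by
      simp only [hexp, Finset.sum_add_distrib, two_mul]
      congr 1
      rw [Finset.sum_comm]
    rw [h1]
    have h2 : ∀ v ∈ S, ∑ w ∈ S, ((if r w v then 1 else 0) + (if r v w then 1 else 0))
        = S.card - 1 := by
      intro v hv
      have : ∀ w ∈ S, ((if r w v then 1 else 0) + (if r v w then 1 else 0))
          = if w ≠ v then 1 else 0 := by
        intro w _
        by_cases hwv : w = v
        · subst hwv
          simp [hT.1 w]
        · have hx := hT.2 w v hwv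
          rcases hx with ⟨h1', h2'⟩ | ⟨h1', h2'⟩ <;> simp [h1', h2', hwv]
      rw [Finset.sum_congr rfl this, Finset.sum_boole]
      simp only [Nat.cast_id]
      rw [Finset.filter_ne', Finset.card_erase_of_mem hv]
    rw [Finset.sum_congr rfl h2]
    simp [mul_comm]
  have h3 : 2 * k * S.card ≤ S.card * (S.card - 1) := by
    calc 2 * k * S.card = 2 * (k * S.card) := by ring
      _ ≤ 2 * ∑ v ∈ S, (S.filter fun w => r w v).card := by
          exact Nat.mul_le_mul_left 2 hsum
      _ = S.card * (S.card - 1) := hdouble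
  rw [hn] at hu ⊢
  have hpos : 0 < S.card := hu
  have : 2 * k ≤ S.card - 1 := by
    have := h3
    rw [mul_comm S.card (S.card - 1)] at this
    exact Nat.le_of_mul_le_mul_right this hpos
  omega
end

section
/- Let T be a tournament with π₂(T) ≥ 1, and let P be a path in T on p vertices that is non-extendable (there is no path in T with the same endpoints whose vertex set is V(P) together with exactly one additional vertex). Then p ≥ 3·π₂(T) + 3. -/
open Finset

variable {V : Type*} [Fintype V] [DecidableEq V]

set_option linter.unusedSectionVars false

namespace S9

lemma tasymm {r : V → V → Prop} (hT : IsTournament r) {x y : V} (h : r x y) : ¬ r y x := by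
  intro h2
  rcases eq_or_ne x y with rfl | hne
  · exact hT.1 x h
  · rcases hT.2 x y hne with ⟨_, hn⟩ | ⟨_, hn⟩
    · exact hn h2
    · exact hn h

lemma ttotal {r : V → V → Prop} (hT : IsTournament r) {x y : V} (h : x ≠ y) (h2 : ¬ r x y) :
    r y x := by
  rcases hT.2 x y h with ⟨h3, _⟩ | ⟨h3, _⟩
  · exact absurd h3 h2
  · exact h3

/-- Context: `l` is the path, `u` its indexing function, `p` its length. -/
structure Ctx (r : V → V → Prop) (l : List V) (u : ℕ → V) (p : ℕ) : Prop where
  tourn : IsTournament r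
  lform : l = (List.range' 0 p).map u
  nodup : l.Nodup
  arc : ∀ i, i + 1 < p → r (u i) (u (i + 1))
  hp : 2 ≤ p

namespace Ctx

variable {r : V → V → Prop} {l : List V} {u : ℕ → V} {p : ℕ}

lemma mem_l (C : Ctx r l u p) {i : ℕ} (hi : i < p) : u i ∈ l := by
  rw [C.lform]
  exact List.mem_map_of_mem (f := u) (by simp [List.mem_range']; omega)

lemma mem_l' (C : Ctx r l u p) {x : V} (hx : x ∈ l) : ∃ i, i < p ∧ u i = x := by
  rw [C.lform] at hx
  simp only [List.mem_map, List.mem_range'] at hx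
  obtain ⟨i, hi, rfl⟩ := hx
  exact ⟨i, by omega, rfl⟩

lemma inj (C : Ctx r l u p) {i j : ℕ} (hi : i < p) (hj : j < p) (h : u i = u j) : i = j := by
  have h1 : l.Nodup := C.nodup
  rw [C.lform] at h1
  have h2 := (List.nodup_map_iff_inj_on (List.nodup_range' (s := 0) (n := p))).mp h1
  exact h2 i (by simp [List.mem_range']; omega) j (by simp [List.mem_range']; omega) h

lemma ne' (C : Ctx r l u p) {i j : ℕ} (hi : i < p) (hj : j < p) (h : i ≠ j) : u i ≠ u j :=
  fun hc => h (C.inj hi hj hc)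

lemma noarc_rev (C : Ctx r l u p) {i : ℕ} (h : i + 1 < p) : ¬ r (u (i + 1)) (u i) :=
  tasymm C.tourn (C.arc i h)

lemma card_l (C : Ctx r l u p) : l.toFinset.card = p := by
  rw [List.toFinset_card_of_nodup C.nodup, C.lform]
  simp

lemma head? (C : Ctx r l u p) : l.head? = some (u 0) := by
  rw [C.lform]
  have : p = (p - 1) + 1 := by have := C.hp; omega
  rw [this, List.range'_succ]
  simp

lemma getLast?_range' (s n : ℕ) : (List.range' s (n + 1)).getLast? = some (s + n) := by
  have h := List.range'_concat (s := s) (n := n) (step := 1)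
  rw [h, List.getLast?_concat]
  simp

lemma head?_range' {s n : ℕ} (h : 0 < n) : (List.range' s n).head? = some s := by
  rw [show n = (n - 1) + 1 from by omega, List.range'_succ]
  simp

lemma nodup_2ranges {s1 n1 s2 n2 : ℕ} (h : s1 + n1 ≤ s2 ∨ s2 + n2 ≤ s1) :
    (List.range' s1 n1 ++ List.range' s2 n2).Nodup := by
  refine List.nodup_append'.mpr ⟨List.nodup_range' 1, List.nodup_range' 1, ?_⟩
  intro a ha hb
  rw [List.mem_range'_1] at ha hb
  omega

lemma getLast? (C : Ctx r l u p) : l.getLast? = some (u (p - 1)) := by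
  rw [C.lform]
  have : p = (p - 1) + 1 := by have := C.hp; omega
  rw [this, List.getLast?_map, getLast?_range']
  simp

end Ctx

/-- Segment of the path as a list. -/
def seg (u : ℕ → V) (s n : ℕ) : List V := (List.range' s n).map u

namespace Ctx

variable {r : V → V → Prop} {l : List V} {u : ℕ → V} {p : ℕ}

lemma seg_mem {s n : ℕ} {x : V} : x ∈ seg u s n ↔ ∃ i, s ≤ i ∧ i < s + n ∧ u i = x := by
  simp only [seg, List.mem_map, List.mem_range'_1]
  constructor
  · rintro ⟨i, ⟨hi1, hi2⟩, rfl⟩; exact ⟨i, hi1, hi2, rfl⟩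
  · rintro ⟨i, h1, h2, rfl⟩; exact ⟨i, ⟨h1, h2⟩, rfl⟩

lemma seg_chain (C : Ctx r l u p) {s n : ℕ} (h : s + n ≤ p) : (seg u s n).Chain' r := by
  induction n generalizing s with
  | zero => simp [seg, List.Chain']
  | succ m ih =>
    rcases Nat.eq_zero_or_pos m with rfl | hm
    · simp [seg, List.Chain']
    · have : m = (m - 1) + 1 := by omega
      rw [seg, List.range'_succ, List.map_cons, List.Chain', List.isChain_cons]
      refine ⟨?_, ih (by omega)⟩
      intro y hy
      rw [show (List.range' (s+1) m).map u = seg u (s+1) m from rfl] at hy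
      rw [this, seg, List.range'_succ, List.map_cons, List.head?_cons, Option.mem_some_iff] at hy
      subst hy
      exact C.arc s (by omega)

lemma seg_head? {s n : ℕ} (h : 0 < n) : (seg u s n).head? = some (u s) := by
  have : n = (n - 1) + 1 := by omega
  rw [seg, this, List.range'_succ]
  simp

lemma seg_getLast? {s n : ℕ} (h : 0 < n) : (seg u s n).getLast? = some (u (s + n - 1)) := by
  have : n = (n - 1) + 1 := by omega
  rw [seg, this, List.getLast?_map, getLast?_range', Option.map_some]
  have h2 : s + (n - 1) = s + (n - 1 + 1) - 1 := by omega
  rw [h2]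

lemma seg_len {s n : ℕ} : (seg u s n).length = n := by simp [seg]

/-- Generic extension contradiction: an index-based rearrangement yields `Extendable`. -/
lemma no_ext (C : Ctx r l u p) (hne : ¬ Extendable r l) {w : V} (hw : w ∉ l.toFinset)
    (J₁ J₂ : List ℕ)
    (hnd : (J₁ ++ J₂).Nodup) (hlt : ∀ i ∈ J₁ ++ J₂, i < p)
    (hlenJ : (J₁ ++ J₂).length = p)
    (hch : ((J₁.map u) ++ w :: (J₂.map u)).Chain' r)
    (hhead : J₁.head? = some 0)
    (hlast : J₂.getLast? = some (p - 1)) : False := by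
  apply hne
  have hndV : ((J₁.map u) ++ w :: (J₂.map u)).Nodup := by
    have hwl : ∀ i ∈ J₁ ++ J₂, u i ≠ w := by
      intro i hi hc
      exact hw (by rw [← hc]; exact List.mem_toFinset.mpr (C.mem_l (hlt i hi)))
    have hinj : ∀ x ∈ J₁ ++ J₂, ∀ y ∈ J₁ ++ J₂, u x = u y → x = y := by
      intro x hx y hy hxy
      exact C.inj (hlt x hx) (hlt y hy) hxy
    rcases List.nodup_append'.mp hnd with ⟨h1, h2, h12⟩
    refine List.nodup_append'.mpr ⟨?_, ?_, ?_⟩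
    · exact h1.map_on (fun x hx y hy => hinj x (by simp [hx]) y (by simp [hx, hy]))
    · refine List.nodup_cons.mpr ⟨?_, ?_⟩
      · simp only [List.mem_map]
        rintro ⟨i, hi, hc⟩
        exact hwl i (by simp [hi]) hc
      · exact h2.map_on (fun x hx y hy => hinj x (by simp [hx]) y (by simp [hx, hy]))
    · intro a ha hb
      simp only [List.mem_map] at ha
      obtain ⟨i, hi, rfl⟩ := ha
      rcases List.mem_cons.mp hb with hb | hb
      · exact hwl i (by simp [hi]) hb
      · simp only [List.mem_map] at hb
        obtain ⟨j, hj, hji⟩ := hb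
        have : j = i := hinj j (by simp [hj]) i (by simp [hi]) hji
        subst this
        exact h12 hi hj
  refine ⟨w, hw, (J₁.map u) ++ w :: (J₂.map u), ⟨hndV, hch⟩, ?_, ?_, ?_⟩
  · -- head?
    rw [C.head?]
    rcases J₁ with _ | ⟨a, J⟩
    · simp at hhead
    · simp only [List.head?_cons, Option.some.injEq] at hhead
      subst hhead
      rfl
  · -- getLast?
    rw [C.getLast?]
    have h2 : (w :: (J₂.map u)) ≠ [] := by simp
    rw [List.getLast?_append_of_ne_nil _ h2]
    rcases J₂ with _ | ⟨a, J⟩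
    · simp at hlast
    · rw [List.map_cons, List.getLast?_cons_cons, ← List.map_cons, List.getLast?_map, hlast]
      rfl
  · -- toFinset
    have hsub : ((J₁.map u) ++ w :: (J₂.map u)).toFinset ⊆ insert w l.toFinset := by
      intro x hx
      simp only [List.mem_toFinset, List.mem_append, List.mem_cons, List.mem_map] at hx
      rcases hx with ⟨i, hi, rfl⟩ | rfl | ⟨i, hi, rfl⟩
      · exact Finset.mem_insert_of_mem (List.mem_toFinset.mpr (C.mem_l (hlt i (by simp [hi]))))
      · exact Finset.mem_insert_self _ _
      · exact Finset.mem_insert_of_mem (List.mem_toFinset.mpr (C.mem_l (hlt i (by simp [hi]))))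
    have hcard2 : (insert w l.toFinset).card = p + 1 := by
      rw [Finset.card_insert_of_notMem hw, C.card_l]
    apply Finset.eq_of_subset_of_card_le hsub
    rw [hcard2]
    rw [List.toFinset_card_of_nodup hndV]
    simp only [List.length_append, List.length_cons, List.length_map]
    have := hlenJ
    simp only [List.length_append] at this
    omega

end Ctx

namespace Ctx

variable {r : V → V → Prop} {l : List V} {u : ℕ → V} {p : ℕ}

lemma head?_seg_append {s n : ℕ} {L : List V} (h : 0 < n) :
    (seg u s n ++ L).head? = some (u s) := by
  have : n = (n - 1) + 1 := by omega
  rw [seg, this, List.range'_succ]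
  simp

lemma chain'_seg_cons (C : Ctx r l u p) {s n : ℕ} {L : List V} (h : s + n ≤ p)
    (hL : L.Chain' r) (hj : ∀ y ∈ L.head?, r (u (s + n - 1)) y) :
    (seg u s n ++ L).Chain' r := by
  rcases Nat.eq_zero_or_pos n with rfl | hn
  · simpa [seg] using hL
  · rw [List.Chain', List.isChain_append]
    refine ⟨C.seg_chain h, hL, ?_⟩
    intro x hx
    rw [seg_getLast? hn] at hx
    simp only [Option.mem_def, Option.some.injEq] at hx
    subst hx
    exact hj

lemma chain'_cons_w {w : V} {L : List V} (hL : L.Chain' r) (hj : ∀ y ∈ L.head?, r w y) :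
    (w :: L).Chain' r :=
  List.isChain_cons.mpr ⟨hj, hL⟩

/-- No insertion of an outside vertex between consecutive path vertices. -/
lemma no_insert (C : Ctx r l u p) (hne : ¬ Extendable r l) {v : V} (hv : v ∉ l.toFinset)
    {i : ℕ} (hi : i + 1 < p) : ¬ (r (u i) v ∧ r v (u (i + 1))) := by
  rintro ⟨h1, h2⟩
  refine C.no_ext hne hv (List.range' 0 (i+1)) (List.range' (i+1) (p-i-1)) ?_ ?_ ?_ ?_ ?_ ?_
  · exact nodup_2ranges (by omega)
  · intro j hj
    simp only [List.mem_append, List.mem_range'_1] at hj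
    omega
  · simp only [List.length_append, List.length_range']
    omega
  · show ((seg u 0 (i+1)) ++ v :: (seg u (i+1) (p-i-1))).Chain' r
    refine C.chain'_seg_cons (by omega) ?_ ?_
    · refine chain'_cons_w (C.seg_chain (by omega)) ?_
      intro y hy
      rw [seg_head? (show 0 < p - i - 1 from by omega)] at hy
      simp only [Option.mem_def, Option.some.injEq] at hy
      subst hy
      exact h2
    · intro y hy
      simp only [List.head?_cons, Option.mem_def, Option.some.injEq] at hy
      subst hy
      simpa using h1
  · exact head?_range' (by omega)
  · rw [show p - i - 1 = (p-i-2)+1 from by omega, getLast?_range']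
    congr 1
    omega

/-- Every outside vertex has a threshold. -/
lemma threshold (C : Ctx r l u p) (hne : ¬ Extendable r l) [DecidableRel r] {v : V}
    (hv : v ∉ l.toFinset) :
    ∃ t, t ≤ p ∧ (∀ i, i < t → r v (u i)) ∧ (∀ i, t ≤ i → i < p → r (u i) v) := by
  have hvne : ∀ i, i < p → v ≠ u i := by
    intro i hi hc
    exact hv (List.mem_toFinset.mpr (hc ▸ C.mem_l hi))
  have mono : ∀ i, i + 1 < p → r (u i) v → r (u (i+1)) v := by
    intro i hi h
    by_contra hc
    exact C.no_insert hne hv hi ⟨h, ttotal C.tourn (Ne.symm (hvne _ hi)) hc⟩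
  classical
  by_cases hex : ∃ i, i < p ∧ r (u i) v
  · set t := Nat.find hex with htdef
    have hspec : t < p ∧ r (u t) v := Nat.find_spec hex
    have hup0 : ∀ d, t + d < p → r (u (t + d)) v := by
      intro d
      induction d with
      | zero => intro _; exact hspec.2
      | succ m ih =>
        intro hm
        exact mono (t + m) (by omega) (ih (by omega))
    refine ⟨t, by omega, ?_, ?_⟩
    · intro i hi
      have hmin := Nat.find_min hex hi
      simp only [not_and] at hmin
      have hip : i < p := by omega
      exact ttotal C.tourn (hvne i hip).symm (hmin hip)
    · intro i h1 h2
      have : i = t + (i - t) := by omega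
      rw [this]
      exact hup0 _ (by omega)
  · push_neg at hex
    refine ⟨p, le_refl p, ?_, ?_⟩
    · intro i hi
      exact ttotal C.tourn (hvne i hi).symm (hex i hi)
    · intro i h1 h2
      omega

end Ctx

namespace Ctx

variable {r : V → V → Prop} {l : List V} {u : ℕ → V} {p : ℕ} [DecidableRel r] {π : ℕ}

/-- Midpoints of a safe pair all lie on the path. -/
lemma mine_gen (C : Ctx r l u p) (hπ : IsPi2 r π) {x y : V} (hxy : x ≠ y)
    (hsafe : ∀ v, v ∉ l.toFinset → ¬(r x v ∧ r v y)) :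
    π ≤ ((l.toFinset).filter fun v => r x v ∧ r v y).card := by
  refine le_trans (hπ.1 x y hxy) (Finset.card_le_card ?_)
  intro v hv
  simp only [Finset.mem_filter, Finset.mem_univ, true_and] at hv
  simp only [Finset.mem_filter]
  refine ⟨?_, hv⟩
  by_contra hc
  exact hsafe v hc hv

lemma fwd_safe (C : Ctx r l u p) (hne : ¬ Extendable r l) {a b : ℕ} (hab : a < b) (hb : b < p) :
    ∀ v, v ∉ l.toFinset → ¬(r (u a) v ∧ r v (u b)) := by
  rintro v hv ⟨h1, h2⟩
  obtain ⟨t, htp, hlo, hhi⟩ := C.threshold hne hv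
  have h3 : ¬ a < t := fun hc => tasymm C.tourn (hlo a hc) h1
  have h4 : ¬ t ≤ b := fun hc => tasymm C.tourn (hhi b hc hb) h2
  omega

lemma mid1 (C : Ctx r l u p) (hπ : IsPi2 r π) (hπ1 : 1 ≤ π) {a b : ℕ}
    (ha : a < p) (hb : b < p) (hab : a ≠ b)
    (hsafe : ∀ v, v ∉ l.toFinset → ¬(r (u a) v ∧ r v (u b))) :
    ∃ c, c < p ∧ c ≠ a ∧ c ≠ b ∧ r (u a) (u c) ∧ r (u c) (u b) := by
  have h := C.mine_gen hπ (C.ne' ha hb hab) hsafe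
  have h2 : 0 < ((l.toFinset).filter fun v => r (u a) v ∧ r v (u b)).card := by omega
  obtain ⟨v, hv⟩ := Finset.card_pos.mp h2
  simp only [Finset.mem_filter, List.mem_toFinset] at hv
  obtain ⟨c, hc, rfl⟩ := C.mem_l' hv.1
  refine ⟨c, hc, ?_, ?_, hv.2.1, hv.2.2⟩
  · rintro rfl; exact C.tourn.1 _ hv.2.1
  · rintro rfl; exact C.tourn.1 _ hv.2.2

lemma mid2 (C : Ctx r l u p) (hπ : IsPi2 r π) (hπ2 : 2 ≤ π) {a b : ℕ}
    (ha : a < p) (hb : b < p) (hab : a ≠ b)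
    (hsafe : ∀ v, v ∉ l.toFinset → ¬(r (u a) v ∧ r v (u b))) :
    ∃ c d, c < p ∧ d < p ∧ c ≠ d ∧
      (r (u a) (u c) ∧ r (u c) (u b)) ∧ (r (u a) (u d) ∧ r (u d) (u b)) := by
  have h := C.mine_gen hπ (C.ne' ha hb hab) hsafe
  have h2 : 1 < ((l.toFinset).filter fun v => r (u a) v ∧ r v (u b)).card := by omega
  obtain ⟨v, hv, w, hw, hvw⟩ := Finset.one_lt_card.mp h2
  simp only [Finset.mem_filter, List.mem_toFinset] at hv hw
  obtain ⟨c, hc, rfl⟩ := C.mem_l' hv.1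
  obtain ⟨d, hd, rfl⟩ := C.mem_l' hw.1
  exact ⟨c, d, hc, hd, fun h => hvw (h ▸ rfl), hv.2, hw.2⟩

/-- The triangle counting argument. -/
lemma trio (C : Ctx r l u p) (hne : ¬ Extendable r l) (hπ : IsPi2 r π) {i : ℕ}
    (h1 : 1 ≤ i) (h2 : i + 3 ≤ p)
    (hfree : ∀ v, v ∉ l.toFinset → ¬(r (u (i+2)) v ∧ r v (u i))) : 3 * π + 3 ≤ p := by
  have hT := C.tourn
  set A := (l.toFinset).filter (fun v => r (u i) v ∧ r v (u (i+1))) with hA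
  set B := (l.toFinset).filter (fun v => r (u (i+1)) v ∧ r v (u (i+2))) with hB
  set Cs := (l.toFinset).filter (fun v => r (u (i+2)) v ∧ r v (u i)) with hC
  have hcA : π ≤ A.card := C.mine_gen hπ (C.ne' (by omega) (by omega) (by omega))
    (C.fwd_safe hne (by omega) (by omega))
  have hcB : π ≤ B.card := C.mine_gen hπ (C.ne' (by omega) (by omega) (by omega))
    (C.fwd_safe hne (by omega) (by omega))
  have hcC : π ≤ Cs.card := C.mine_gen hπ (C.ne' (by omega) (by omega) (by omega)) hfree
  set D : Finset V := {u i, u (i+1), u (i+2)} with hD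
  have hcD : D.card = 3 := by
    rw [hD]
    rw [Finset.card_insert_of_notMem, Finset.card_insert_of_notMem, Finset.card_singleton]
    · simp only [Finset.mem_singleton]
      exact C.ne' (by omega) (by omega) (by omega)
    · simp only [Finset.mem_insert, Finset.mem_singleton]
      push_neg
      exact ⟨C.ne' (by omega) (by omega) (by omega), C.ne' (by omega) (by omega) (by omega)⟩
  have dAB : Disjoint A B := by
    rw [Finset.disjoint_left]
    intro v hv hw
    rw [hA, Finset.mem_filter] at hv
    rw [hB, Finset.mem_filter] at hw
    exact tasymm hT hv.2.2 hw.2.1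
  have dAC : Disjoint A Cs := by
    rw [Finset.disjoint_left]
    intro v hv hw
    rw [hA, Finset.mem_filter] at hv
    rw [hC, Finset.mem_filter] at hw
    exact tasymm hT hv.2.1 hw.2.2
  have dBC : Disjoint B Cs := by
    rw [Finset.disjoint_left]
    intro v hv hw
    rw [hB, Finset.mem_filter] at hv
    rw [hC, Finset.mem_filter] at hw
    exact tasymm hT hv.2.2 hw.2.1
  have dD : Disjoint (A ∪ B ∪ Cs) D := by
    rw [Finset.disjoint_right]
    intro v hv hw
    simp only [Finset.mem_union] at hw
    rw [hD] at hv
    simp only [Finset.mem_insert, Finset.mem_singleton] at hv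
    have harc1 := C.arc i (by omega)
    have harc2 := C.arc (i+1) (by omega)
    rcases hv with rfl | rfl | rfl <;>
      rcases hw with (hw | hw) | hw <;>
      rw [Finset.mem_filter] at hw
    · exact hT.1 _ hw.2.1
    · exact tasymm hT harc1 hw.2.1
    · exact hT.1 _ hw.2.2
    · exact hT.1 _ hw.2.2
    · exact hT.1 _ hw.2.1
    · exact tasymm hT harc2 hw.2.1
    · exact tasymm hT harc2 hw.2.2
    · exact hT.1 _ hw.2.2
    · exact hT.1 _ hw.2.1
  have hsub : A ∪ B ∪ Cs ∪ D ⊆ l.toFinset := by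
    intro v hv
    simp only [Finset.mem_union] at hv
    rcases hv with ((hv | hv) | hv) | hv
    · exact (Finset.mem_filter.mp hv).1
    · exact (Finset.mem_filter.mp hv).1
    · exact (Finset.mem_filter.mp hv).1
    · rw [hD] at hv
      simp only [Finset.mem_insert, Finset.mem_singleton] at hv
      rcases hv with rfl | rfl | rfl
      · exact List.mem_toFinset.mpr (C.mem_l (by omega))
      · exact List.mem_toFinset.mpr (C.mem_l (by omega))
      · exact List.mem_toFinset.mpr (C.mem_l (by omega))
  have hcard : 3 * π + 3 ≤ (A ∪ B ∪ Cs ∪ D).card := by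
    rw [Finset.card_union_of_disjoint dD,
        Finset.card_union_of_disjoint (Finset.disjoint_union_left.mpr ⟨dAC, dBC⟩),
        Finset.card_union_of_disjoint dAB, hcD]
    omega
  have := Finset.card_le_card hsub
  rw [C.card_l] at this
  omega

end Ctx

namespace Ctx

variable {r : V → V → Prop} {l : List V} {u : ℕ → V} {p : ℕ}

/-- The generic rerouting template around a threshold-k outside vertex. -/
lemma Gtmpl (C : Ctx r l u p) (hne : ¬ Extendable r l) {w : V} (hw : w ∉ l.toFinset)
    {k : ℕ} (hk2 : 2 ≤ k) (hkp : k + 2 ≤ p)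
    (hw1 : ∀ i, i < k → r w (u i)) (hw2 : ∀ i, k ≤ i → i < p → r (u i) w)
    {a b : ℕ} (hak : a + 2 ≤ k) (hbk : k + 1 ≤ b) (hbp : b ≤ p - 1) :
    ¬ (r (u a) (u k) ∧ r (u (k-1)) (u b)) := by
  rintro ⟨h1, h2⟩
  refine C.no_ext hne hw
    (List.range' 0 (a+1) ++ List.range' k (b-k))
    (List.range' (a+1) (k-1-a) ++ List.range' b (p-b)) ?_ ?_ ?_ ?_ ?_ ?_
  · refine List.nodup_append'.mpr ⟨nodup_2ranges (by omega), nodup_2ranges (by omega), ?_⟩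
    intro x hx hy
    simp only [List.mem_append, List.mem_range'_1] at hx hy
    omega
  · intro j hj
    simp only [List.mem_append, List.mem_range'_1] at hj
    omega
  · simp only [List.length_append, List.length_range']
    omega
  · show ((List.range' 0 (a+1) ++ List.range' k (b-k)).map u ++
      w :: ((List.range' (a+1) (k-1-a) ++ List.range' b (p-b)).map u)).Chain' r
    rw [List.map_append, List.map_append, List.append_assoc]
    show ((seg u 0 (a+1)) ++ ((seg u k (b-k)) ++ w :: ((seg u (a+1) (k-1-a)) ++ (seg u b (p-b))))).Chain' r
    refine C.chain'_seg_cons (by omega) ?_ ?_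
    · refine C.chain'_seg_cons (by omega) ?_ ?_
      · refine chain'_cons_w ?_ ?_
        · refine C.chain'_seg_cons (by omega) (C.seg_chain (by omega)) ?_
          intro y hy
          rw [seg_head? (by omega : 0 < p - b)] at hy
          simp only [Option.mem_def, Option.some.injEq] at hy
          subst hy
          have e : a + 1 + (k-1-a) - 1 = k - 1 := by omega
          rw [e]
          exact h2
        · intro y hy
          rw [head?_seg_append (by omega : 0 < k-1-a)] at hy
          simp only [Option.mem_def, Option.some.injEq] at hy
          subst hy
          exact hw1 (a+1) (by omega)
      · intro y hy
        simp only [List.head?_cons, Option.mem_def, Option.some.injEq] at hy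
        subst hy
        exact hw2 (k + (b-k) - 1) (by omega) (by omega)
    · intro y hy
      rw [head?_seg_append (by omega : 0 < b - k)] at hy
      simp only [Option.mem_def, Option.some.injEq] at hy
      subst hy
      have e : 0 + (a+1) - 1 = a := by omega
      rw [e]
      exact h1
  · rw [List.head?_append, head?_range' (by omega)]
    rfl
  · rw [List.getLast?_append_of_ne_nil]
    · rw [show p - b = (p-b-1)+1 from by omega, getLast?_range']
      congr 1
      omega
    · simp only [ne_eq, List.range'_eq_nil_iff]
      omega

/-- The A/B dichotomy at a threshold. -/
lemma dichotomy (C : Ctx r l u p) (hne : ¬ Extendable r l) {w : V} (hw : w ∉ l.toFinset)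
    {k : ℕ} (hk2 : 2 ≤ k) (hkp : k + 2 ≤ p)
    (hw1 : ∀ i, i < k → r w (u i)) (hw2 : ∀ i, k ≤ i → i < p → r (u i) w) :
    (∀ a, a + 2 ≤ k → r (u k) (u a)) ∨ (∀ b, k + 1 ≤ b → b ≤ p - 1 → r (u b) (u (k-1))) := by
  by_cases hX : ∃ a, a + 2 ≤ k ∧ r (u a) (u k)
  · right
    obtain ⟨a, ha, har⟩ := hX
    intro b hb1 hb2
    have := C.Gtmpl hne hw hk2 hkp hw1 hw2 ha hb1 hb2
    rw [not_and] at this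
    exact ttotal C.tourn (C.ne' (by omega) (by omega) (by omega)) (this har)
  · left
    push_neg at hX
    intro a ha
    exact ttotal C.tourn (C.ne' (by omega) (by omega) (by omega)) (hX a ha)

end Ctx

namespace Ctx

variable {r : V → V → Prop} {l : List V} {u : ℕ → V} {p : ℕ}

/-- Template for the adjacent B–A pair at distance 1. -/
lemma Td1 (C : Ctx r l u p) (hne : ¬ Extendable r l) {w : V} (hw : w ∉ l.toFinset)
    {K : ℕ} (hK2 : 2 ≤ K) (hKp : K + 3 ≤ p)
    (hw1 : ∀ i, i < K → r w (u i)) (hw2 : ∀ i, K ≤ i → i < p → r (u i) w)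
    (hA : ∀ t, K + 2 ≤ t → t < p → r (u t) (u K))
    {z₁ z₂ : ℕ} (hz₁ : z₁ + 2 ≤ K) (hz₂1 : K + 3 ≤ z₂) (hz₂2 : z₂ < p)
    (ha1 : r (u z₁) (u (K+1))) (ha2 : r (u (K-1)) (u z₂)) : False := by
  refine C.no_ext hne hw
    (List.range' 0 (z₁+1) ++ List.range' (K+1) (z₂-1-K) ++ List.range' K 1)
    (List.range' (z₁+1) (K-1-z₁) ++ List.range' z₂ (p-z₂)) ?_ ?_ ?_ ?_ ?_ ?_
  · refine List.nodup_append'.mpr ⟨?_, nodup_2ranges (by omega), ?_⟩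
    · refine List.nodup_append'.mpr ⟨nodup_2ranges (by omega), List.nodup_range' 1, ?_⟩
      intro x hx hy
      simp only [List.mem_append, List.mem_range'_1] at hx hy
      omega
    · intro x hx hy
      simp only [List.mem_append, List.mem_range'_1] at hx hy
      omega
  · intro j hj
    simp only [List.mem_append, List.mem_range'_1] at hj
    omega
  · simp only [List.length_append, List.length_range']
    omega
  · show ((List.range' 0 (z₁+1) ++ List.range' (K+1) (z₂-1-K) ++ List.range' K 1).map u ++
      w :: ((List.range' (z₁+1) (K-1-z₁) ++ List.range' z₂ (p-z₂)).map u)).Chain' r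
    rw [List.map_append, List.map_append, List.map_append, List.append_assoc,
      List.append_assoc]
    show ((seg u 0 (z₁+1)) ++ ((seg u (K+1) (z₂-1-K)) ++ ((seg u K 1) ++
      w :: ((seg u (z₁+1) (K-1-z₁)) ++ (seg u z₂ (p-z₂)))))).Chain' r
    refine C.chain'_seg_cons (by omega) ?_ ?_
    · refine C.chain'_seg_cons (by omega) ?_ ?_
      · refine C.chain'_seg_cons (by omega) ?_ ?_
        · refine chain'_cons_w ?_ ?_
          · refine C.chain'_seg_cons (by omega) (C.seg_chain (by omega)) ?_
            intro y hy
            rw [seg_head? (by omega : 0 < p - z₂)] at hy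
            simp only [Option.mem_def, Option.some.injEq] at hy
            subst hy
            rw [show z₁ + 1 + (K-1-z₁) - 1 = K - 1 from by omega]
            exact ha2
          · intro y hy
            rw [head?_seg_append (by omega : 0 < K-1-z₁)] at hy
            simp only [Option.mem_def, Option.some.injEq] at hy
            subst hy
            exact hw1 (z₁+1) (by omega)
        · intro y hy
          simp only [List.head?_cons, Option.mem_def, Option.some.injEq] at hy
          subst hy
          rw [show K + 1 - 1 = K from by omega]
          exact hw2 K (le_refl K) (by omega)
      · intro y hy
        rw [head?_seg_append (by omega : 0 < (1:ℕ))] at hy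
        simp only [Option.mem_def, Option.some.injEq] at hy
        subst hy
        rw [show K + 1 + (z₂-1-K) - 1 = z₂ - 1 from by omega]
        exact hA (z₂-1) (by omega) (by omega)
    · intro y hy
      rw [head?_seg_append (by omega : 0 < z₂-1-K)] at hy
      simp only [Option.mem_def, Option.some.injEq] at hy
      subst hy
      rw [show 0 + (z₁+1) - 1 = z₁ from by omega]
      exact ha1
  · rw [List.append_assoc, List.head?_append, head?_range' (by omega)]
    rfl
  · rw [List.getLast?_append_of_ne_nil]
    · rw [show p - z₂ = (p-z₂-1)+1 from by omega, getLast?_range']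
      congr 1
      omega
    · simp only [ne_eq, List.range'_eq_nil_iff]
      omega

end Ctx

namespace Ctx

variable {r : V → V → Prop} {l : List V} {u : ℕ → V} {p : ℕ}

/-- Template P-alpha for the distance-2 B–A pair, case z₂ = K+3. -/
lemma Pa (C : Ctx r l u p) (hne : ¬ Extendable r l) {w : V} (hw : w ∉ l.toFinset)
    {K : ℕ} (hK2 : 2 ≤ K) (hKp : K + 4 ≤ p)
    (hw1 : ∀ i, i < K → r w (u i)) (hw2 : ∀ i, K ≤ i → i < p → r (u i) w)
    (hc2 : r (u (K+2)) (u K))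
    {z₁ : ℕ} (hz₁ : z₁ + 2 ≤ K) (hq : r (u z₁) (u (K+2)))
    (ha3 : r (u (K-1)) (u (K+3))) : False := by
  refine C.no_ext hne hw
    (List.range' 0 (z₁+1) ++ List.range' (K+2) 1 ++ List.range' K 2)
    (List.range' (z₁+1) (K-1-z₁) ++ List.range' (K+3) (p-K-3)) ?_ ?_ ?_ ?_ ?_ ?_
  · refine List.nodup_append'.mpr ⟨?_, nodup_2ranges (by omega), ?_⟩
    · refine List.nodup_append'.mpr ⟨nodup_2ranges (by omega), List.nodup_range' 1, ?_⟩
      intro x hx hy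
      simp only [List.mem_append, List.mem_range'_1] at hx hy
      omega
    · intro x hx hy
      simp only [List.mem_append, List.mem_range'_1] at hx hy
      omega
  · intro j hj
    simp only [List.mem_append, List.mem_range'_1] at hj
    omega
  · simp only [List.length_append, List.length_range']
    omega
  · show ((List.range' 0 (z₁+1) ++ List.range' (K+2) 1 ++ List.range' K 2).map u ++
      w :: ((List.range' (z₁+1) (K-1-z₁) ++ List.range' (K+3) (p-K-3)).map u)).Chain' r
    rw [List.map_append, List.map_append, List.map_append, List.append_assoc,
      List.append_assoc]
    show ((seg u 0 (z₁+1)) ++ ((seg u (K+2) 1) ++ ((seg u K 2) ++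
      w :: ((seg u (z₁+1) (K-1-z₁)) ++ (seg u (K+3) (p-K-3)))))).Chain' r
    refine C.chain'_seg_cons (by omega) ?_ ?_
    · refine C.chain'_seg_cons (by omega) ?_ ?_
      · refine C.chain'_seg_cons (by omega) ?_ ?_
        · refine chain'_cons_w ?_ ?_
          · refine C.chain'_seg_cons (by omega) (C.seg_chain (by omega)) ?_
            intro y hy
            rw [seg_head? (by omega : 0 < p - K - 3)] at hy
            simp only [Option.mem_def, Option.some.injEq] at hy
            subst hy
            rw [show z₁ + 1 + (K-1-z₁) - 1 = K - 1 from by omega]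
            exact ha3
          · intro y hy
            rw [head?_seg_append (by omega : 0 < K-1-z₁)] at hy
            simp only [Option.mem_def, Option.some.injEq] at hy
            subst hy
            exact hw1 (z₁+1) (by omega)
        · intro y hy
          simp only [List.head?_cons, Option.mem_def, Option.some.injEq] at hy
          subst hy
          rw [show K + 2 - 1 = K + 1 from by omega]
          exact hw2 (K+1) (by omega) (by omega)
      · intro y hy
        rw [head?_seg_append (by omega : 0 < (2:ℕ))] at hy
        simp only [Option.mem_def, Option.some.injEq] at hy
        subst hy
        rw [show K + 2 + 1 - 1 = K + 2 from by omega]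
        exact hc2
    · intro y hy
      rw [head?_seg_append (by omega : 0 < (1:ℕ))] at hy
      simp only [Option.mem_def, Option.some.injEq] at hy
      subst hy
      rw [show 0 + (z₁+1) - 1 = z₁ from by omega]
      exact hq
  · rw [List.append_assoc, List.head?_append, head?_range' (by omega)]
    rfl
  · rw [List.getLast?_append_of_ne_nil]
    · rw [show p - K - 3 = (p-K-4)+1 from by omega, getLast?_range']
      congr 1
      omega
    · simp only [ne_eq, List.range'_eq_nil_iff]
      omega

/-- Template P-beta for the distance-2 B–A pair, case z₁ = K−2 (uses the threshold-(K+2) vertex). -/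
lemma Pb (C : Ctx r l u p) (hne : ¬ Extendable r l) {w : V} (hw : w ∉ l.toFinset)
    {K : ℕ} (hK2 : 2 ≤ K) (hKp : K + 4 ≤ p)
    (hw1 : ∀ i, i < K + 2 → r w (u i)) (hw2 : ∀ i, K + 2 ≤ i → i < p → r (u i) w)
    (hc1 : r (u (K+1)) (u (K-1)))
    {z₂ : ℕ} (hz₂1 : K + 3 ≤ z₂) (hz₂2 : z₂ < p)
    (hq : r (u (K-2)) (u (K+2))) (ha2 : r (u (K-1)) (u z₂)) : False := by
  refine C.no_ext hne hw
    (List.range' 0 (K-1) ++ List.range' (K+2) (z₂-K-2))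
    (List.range' K 2 ++ List.range' (K-1) 1 ++ List.range' z₂ (p-z₂)) ?_ ?_ ?_ ?_ ?_ ?_
  · refine List.nodup_append'.mpr ⟨nodup_2ranges (by omega), ?_, ?_⟩
    · refine List.nodup_append'.mpr ⟨nodup_2ranges (by omega), List.nodup_range' 1, ?_⟩
      intro x hx hy
      simp only [List.mem_append, List.mem_range'_1] at hx hy
      omega
    · intro x hx hy
      simp only [List.mem_append, List.mem_range'_1] at hx hy
      omega
  · intro j hj
    simp only [List.mem_append, List.mem_range'_1] at hj
    omega
  · simp only [List.length_append, List.length_range']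
    omega
  · show ((List.range' 0 (K-1) ++ List.range' (K+2) (z₂-K-2)).map u ++
      w :: ((List.range' K 2 ++ List.range' (K-1) 1 ++ List.range' z₂ (p-z₂)).map u)).Chain' r
    rw [List.map_append, List.map_append, List.map_append, List.append_assoc]
    show ((seg u 0 (K-1)) ++ ((seg u (K+2) (z₂-K-2)) ++
      w :: (((seg u K 2) ++ (seg u (K-1) 1)) ++ (seg u z₂ (p-z₂))))).Chain' r
    rw [List.append_assoc]
    refine C.chain'_seg_cons (by omega) ?_ ?_
    · refine C.chain'_seg_cons (by omega) ?_ ?_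
      · refine chain'_cons_w ?_ ?_
        · refine C.chain'_seg_cons (by omega) ?_ ?_
          · refine C.chain'_seg_cons (by omega) (C.seg_chain (by omega)) ?_
            intro y hy
            rw [seg_head? (by omega : 0 < p - z₂)] at hy
            simp only [Option.mem_def, Option.some.injEq] at hy
            subst hy
            rw [show K - 1 + 1 - 1 = K - 1 from by omega]
            exact ha2
          · intro y hy
            rw [head?_seg_append (by omega : 0 < (1:ℕ))] at hy
            simp only [Option.mem_def, Option.some.injEq] at hy
            subst hy
            rw [show K + 2 - 1 = K + 1 from by omega]
            exact hc1
        · intro y hy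
          rw [head?_seg_append (by omega : 0 < (2:ℕ))] at hy
          simp only [Option.mem_def, Option.some.injEq] at hy
          subst hy
          exact hw1 K (by omega)
      · intro y hy
        simp only [List.head?_cons, Option.mem_def, Option.some.injEq] at hy
        subst hy
        rw [show K + 2 + (z₂-K-2) - 1 = z₂ - 1 from by omega]
        exact hw2 (z₂-1) (by omega) (by omega)
    · intro y hy
      rw [head?_seg_append (by omega : 0 < z₂-K-2)] at hy
      simp only [Option.mem_def, Option.some.injEq] at hy
      subst hy
      rw [show 0 + (K-1) - 1 = K - 2 from by omega]
      exact hq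
  · rw [List.head?_append, head?_range' (by omega)]
    rfl
  · rw [List.append_assoc, List.getLast?_append_of_ne_nil]
    · rw [List.getLast?_append_of_ne_nil]
      · rw [show p - z₂ = (p-z₂-1)+1 from by omega, getLast?_range']
        congr 1
        omega
      · simp only [ne_eq, List.range'_eq_nil_iff]
        omega
    · simp only [ne_eq, List.append_eq_nil_iff, List.range'_eq_nil_iff, not_and]
      omega

end Ctx

lemma pin2 (P : ℕ → Prop) {c d x y : ℕ} (hcd : c ≠ d) (hc : P c) (hd : P d)
    (hchar : ∀ e, P e → e = x ∨ e = y) : P x ∧ P y := by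
  rcases hchar c hc with rfl | rfl <;> rcases hchar d hd with rfl | rfl
  · exact absurd rfl hcd
  · exact ⟨hc, hd⟩
  · exact ⟨hd, hc⟩
  · exact absurd rfl hcd

namespace Ctx

variable {r : V → V → Prop} {l : List V} {u : ℕ → V} {p : ℕ} [DecidableRel r] {π : ℕ}

lemma small_p (C : Ctx r l u p) (hne : ¬ Extendable r l) (hπ : IsPi2 r π) (hπ1 : 1 ≤ π)
    (hp4 : p ≤ 4) : False := by
  have hT := C.tourn
  rcases Nat.lt_or_ge p 3 with h3 | h3
  · have hp2 : p = 2 := by have := C.hp; omega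
    obtain ⟨c, hc, hc1, hc2, m1, m2⟩ := C.mid1 hπ hπ1 (show 0 < p by omega)
      (show 1 < p by omega) (by omega) (C.fwd_safe hne (by omega) (by omega))
    omega
  · obtain ⟨c, hc, hc1, hc2, m1, m2⟩ := C.mid1 hπ hπ1 (show 1 < p by omega)
      (show 2 < p by omega) (by omega) (C.fwd_safe hne (by omega) (by omega))
    have a01 : r (u 0) (u 1) := C.arc 0 (by omega)
    have hcase : c = 0 ∨ c = 3 := by omega
    rcases hcase with rfl | rfl
    · exact tasymm hT a01 m1
    · have a23 : r (u 2) (u 3) := C.arc 2 (by omega)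
      exact tasymm hT a23 m2

lemma M5 (C : Ctx r l u p) (hne : ¬ Extendable r l) (hπ : IsPi2 r π) (hπ1 : 1 ≤ π)
    (hp5 : p = 5) (h42 : r (u 4) (u 2)) : False := by
  subst hp5
  have hT := C.tourn
  have a01 : r (u 0) (u 1) := C.arc 0 (by omega)
  have a12 : r (u 1) (u 2) := C.arc 1 (by omega)
  have a23 : r (u 2) (u 3) := C.arc 2 (by omega)
  have a34 : r (u 3) (u 4) := C.arc 3 (by omega)
  have h14 : r (u 1) (u 4) := by
    obtain ⟨c, hc, hc1, hc2, m1, m2⟩ := C.mid1 hπ hπ1 (show 1 < 5 by omega)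
      (show 2 < 5 by omega) (by omega) (C.fwd_safe hne (by omega) (by omega))
    interval_cases c
    · exact absurd m1 (tasymm hT a01)
    · exact absurd m1 (hT.1 _)
    · exact absurd m2 (hT.1 _)
    · exact absurd m2 (tasymm hT a23)
    · exact m1
  have h203 : r (u 2) (u 0) ∧ r (u 0) (u 3) := by
    obtain ⟨c, hc, hc1, hc2, m1, m2⟩ := C.mid1 hπ hπ1 (show 2 < 5 by omega)
      (show 3 < 5 by omega) (by omega) (C.fwd_safe hne (by omega) (by omega))
    interval_cases c
    · exact ⟨m1, m2⟩
    · exact absurd m1 (tasymm hT a12)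
    · exact absurd m1 (hT.1 _)
    · exact absurd m2 (hT.1 _)
    · exact absurd m1 (tasymm hT h42)
  have h31 : r (u 3) (u 1) := by
    obtain ⟨c, hc, hc1, hc2, m1, m2⟩ := C.mid1 hπ hπ1 (show 3 < 5 by omega)
      (show 4 < 5 by omega) (by omega) (C.fwd_safe hne (by omega) (by omega))
    interval_cases c
    · exact absurd m1 (tasymm hT h203.2)
    · exact m1
    · exact absurd m1 (tasymm hT a23)
    · exact absurd m1 (hT.1 _)
    · exact absurd m2 (hT.1 _)
  obtain ⟨c, hc, hc1, hc2, m1, m2⟩ := C.mid1 hπ hπ1 (show 1 < 5 by omega)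
    (show 4 < 5 by omega) (by omega) (C.fwd_safe hne (by omega) (by omega))
  interval_cases c
  · exact absurd m1 (tasymm hT a01)
  · exact absurd m1 (hT.1 _)
  · exact absurd m2 (tasymm hT h42)
  · exact absurd m1 (tasymm hT h31)
  · exact absurd m2 (hT.1 _)

/-- The p = 8, K = 3 residual configuration is contradictory. -/
lemma Gam (C : Ctx r l u p) (hne : ¬ Extendable r l) (hπ : IsPi2 r π) (hπ2 : 2 ≤ π)
    (hp8 : p = 8)
    (hB1 : r (u 3) (u 0)) (hB2 : r (u 3) (u 1))
    (hA1 : r (u 6) (u 4)) (hA2 : r (u 7) (u 4))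
    (hc1 : r (u 4) (u 2)) (hc2 : r (u 5) (u 3))
    (hz2a : r (u 2) (u 7)) (hz2b : r (u 7) (u 3))
    (hz1a : r (u 4) (u 0)) (hz1b : r (u 0) (u 5)) : False := by
  subst hp8
  have hT := C.tourn
  have a01 : r (u 0) (u 1) := C.arc 0 (by omega)
  have a12 : r (u 1) (u 2) := C.arc 1 (by omega)
  have a23 : r (u 2) (u 3) := C.arc 2 (by omega)
  have a34 : r (u 3) (u 4) := C.arc 3 (by omega)
  have a45 : r (u 4) (u 5) := C.arc 4 (by omega)
  have a56 : r (u 5) (u 6) := C.arc 5 (by omega)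
  have a67 : r (u 6) (u 7) := C.arc 6 (by omega)
  have mids : ∀ a b : ℕ, a < 8 → b < 8 → a ≠ b → a < b →
      ∃ c d, c ≠ d ∧ (c < 8 ∧ r (u a) (u c) ∧ r (u c) (u b)) ∧
        (d < 8 ∧ r (u a) (u d) ∧ r (u d) (u b)) := by
    intro a b ha hb hab hlt
    obtain ⟨c, d, hc, hd, hcd, hmc, hmd⟩ := C.mid2 hπ hπ2 ha hb hab
      (C.fwd_safe hne hlt hb)
    exact ⟨c, d, hcd, ⟨hc, hmc⟩, ⟨hd, hmd⟩⟩
  -- step 1 : pair (1,4) : candidates {6,7}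
  have s1 : (6 < 8 ∧ r (u 1) (u 6) ∧ r (u 6) (u 4)) ∧
      (7 < 8 ∧ r (u 1) (u 7) ∧ r (u 7) (u 4)) := by
    obtain ⟨c, d, hcd, hc, hd⟩ := mids 1 4 (by omega) (by omega) (by omega) (by omega)
    refine pin2 (fun e => e < 8 ∧ r (u 1) (u e) ∧ r (u e) (u 4)) hcd hc hd ?_
    rintro e ⟨he, m1, m2⟩
    interval_cases e
    · exact absurd m1 (tasymm hT a01)
    · exact absurd m1 (hT.1 _)
    · exact absurd m2 (tasymm hT hc1)
    · exact absurd m1 (tasymm hT hB2)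
    · exact absurd m2 (hT.1 _)
    · exact absurd m2 (tasymm hT a45)
    · exact Or.inl rfl
    · exact Or.inr rfl
  have h16 := s1.1.2.1
  have h17 := s1.2.2.1
  -- step 2 : pair (1,6) : candidates {2,5}
  have s2 : (2 < 8 ∧ r (u 1) (u 2) ∧ r (u 2) (u 6)) ∧
      (5 < 8 ∧ r (u 1) (u 5) ∧ r (u 5) (u 6)) := by
    obtain ⟨c, d, hcd, hc, hd⟩ := mids 1 6 (by omega) (by omega) (by omega) (by omega)
    refine pin2 (fun e => e < 8 ∧ r (u 1) (u e) ∧ r (u e) (u 6)) hcd hc hd ?_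
    rintro e ⟨he, m1, m2⟩
    interval_cases e
    · exact absurd m1 (tasymm hT a01)
    · exact absurd m1 (hT.1 _)
    · exact Or.inl rfl
    · exact absurd m1 (tasymm hT hB2)
    · exact absurd m2 (tasymm hT hA1)
    · exact Or.inr rfl
    · exact absurd m2 (hT.1 _)
    · exact absurd m2 (tasymm hT a67)
  have h26 := s2.1.2.2
  have h15 := s2.2.2.1
  -- step 3 : pair (2,5) : candidates {0,7}
  have s3 : (0 < 8 ∧ r (u 2) (u 0) ∧ r (u 0) (u 5)) ∧
      (7 < 8 ∧ r (u 2) (u 7) ∧ r (u 7) (u 5)) := by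
    obtain ⟨c, d, hcd, hc, hd⟩ := mids 2 5 (by omega) (by omega) (by omega) (by omega)
    refine pin2 (fun e => e < 8 ∧ r (u 2) (u e) ∧ r (u e) (u 5)) hcd hc hd ?_
    rintro e ⟨he, m1, m2⟩
    interval_cases e
    · exact Or.inl rfl
    · exact absurd m1 (tasymm hT a12)
    · exact absurd m1 (hT.1 _)
    · exact absurd m2 (tasymm hT hc2)
    · exact absurd m1 (tasymm hT hc1)
    · exact absurd m2 (hT.1 _)
    · exact absurd m2 (tasymm hT a56)
    · exact Or.inr rfl
  have h20 := s3.1.2.1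
  have h75 := s3.2.2.2
  -- step 4 : pair (2,7) : candidates {0,6}
  have s4 : (0 < 8 ∧ r (u 2) (u 0) ∧ r (u 0) (u 7)) ∧
      (6 < 8 ∧ r (u 2) (u 6) ∧ r (u 6) (u 7)) := by
    obtain ⟨c, d, hcd, hc, hd⟩ := mids 2 7 (by omega) (by omega) (by omega) (by omega)
    refine pin2 (fun e => e < 8 ∧ r (u 2) (u e) ∧ r (u e) (u 7)) hcd hc hd ?_
    rintro e ⟨he, m1, m2⟩
    interval_cases e
    · exact Or.inl rfl
    · exact absurd m1 (tasymm hT a12)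
    · exact absurd m1 (hT.1 _)
    · exact absurd m2 (tasymm hT hz2b)
    · exact absurd m1 (tasymm hT hc1)
    · exact absurd m2 (tasymm hT h75)
    · exact Or.inr rfl
    · exact absurd m2 (hT.1 _)
  have h07 := s4.1.2.2
  -- step 5 : pair (3,4) : candidates {1,6}
  have s5 : (1 < 8 ∧ r (u 3) (u 1) ∧ r (u 1) (u 4)) ∧
      (6 < 8 ∧ r (u 3) (u 6) ∧ r (u 6) (u 4)) := by
    obtain ⟨c, d, hcd, hc, hd⟩ := mids 3 4 (by omega) (by omega) (by omega) (by omega)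
    refine pin2 (fun e => e < 8 ∧ r (u 3) (u e) ∧ r (u e) (u 4)) hcd hc hd ?_
    rintro e ⟨he, m1, m2⟩
    interval_cases e
    · exact absurd m2 (tasymm hT hz1a)
    · exact Or.inl rfl
    · exact absurd m1 (tasymm hT a23)
    · exact absurd m1 (hT.1 _)
    · exact absurd m2 (hT.1 _)
    · exact absurd m1 (tasymm hT hc2)
    · exact Or.inr rfl
    · exact absurd m1 (tasymm hT hz2b)
  have h14 := s5.1.2.2
  have h36 := s5.2.2.1
  -- step 6 : pair (3,6) : candidates {0,1}
  have s6 : (0 < 8 ∧ r (u 3) (u 0) ∧ r (u 0) (u 6)) ∧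
      (1 < 8 ∧ r (u 3) (u 1) ∧ r (u 1) (u 6)) := by
    obtain ⟨c, d, hcd, hc, hd⟩ := mids 3 6 (by omega) (by omega) (by omega) (by omega)
    refine pin2 (fun e => e < 8 ∧ r (u 3) (u e) ∧ r (u e) (u 6)) hcd hc hd ?_
    rintro e ⟨he, m1, m2⟩
    interval_cases e
    · exact Or.inl rfl
    · exact Or.inr rfl
    · exact absurd m1 (tasymm hT a23)
    · exact absurd m1 (hT.1 _)
    · exact absurd m2 (tasymm hT hA1)
    · exact absurd m1 (tasymm hT hc2)
    · exact absurd m2 (hT.1 _)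
    · exact absurd m1 (tasymm hT hz2b)
  have h06 := s6.1.2.2
  -- step 7 : pair (4,5) : candidates {0,2}
  have s7 : (0 < 8 ∧ r (u 4) (u 0) ∧ r (u 0) (u 5)) ∧
      (2 < 8 ∧ r (u 4) (u 2) ∧ r (u 2) (u 5)) := by
    obtain ⟨c, d, hcd, hc, hd⟩ := mids 4 5 (by omega) (by omega) (by omega) (by omega)
    refine pin2 (fun e => e < 8 ∧ r (u 4) (u e) ∧ r (u e) (u 5)) hcd hc hd ?_
    rintro e ⟨he, m1, m2⟩
    interval_cases e
    · exact Or.inl rfl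
    · exact absurd m1 (tasymm hT h14)
    · exact Or.inr rfl
    · exact absurd m1 (tasymm hT a34)
    · exact absurd m1 (hT.1 _)
    · exact absurd m2 (hT.1 _)
    · exact absurd m1 (tasymm hT hA1)
    · exact absurd m1 (tasymm hT hA2)
  have h25 := s7.2.2.2
  -- step 8 : pair (5,6) : at most one candidate, contradiction with π ≥ 2
  obtain ⟨c, d, hcd, hc, hd⟩ := mids 5 6 (by omega) (by omega) (by omega) (by omega)
  have hchar : ∀ e, (e < 8 ∧ r (u 5) (u e) ∧ r (u e) (u 6)) → e = 3 := by
    rintro e ⟨he, m1, m2⟩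
    interval_cases e
    · exact absurd m1 (tasymm hT hz1b)
    · exact absurd m1 (tasymm hT h15)
    · exact absurd m1 (tasymm hT h25)
    · rfl
    · exact absurd m1 (tasymm hT a45)
    · exact absurd m1 (hT.1 _)
    · exact absurd m2 (hT.1 _)
    · exact absurd m2 (tasymm hT a67)
  exact hcd ((hchar c hc).trans (hchar d hd).symm)

end Ctx

namespace Ctx

variable {r : V → V → Prop} {l : List V} {u : ℕ → V} {p : ℕ} [DecidableRel r] {π : ℕ}

/-- Midpoint sets contained in two vertices bound π. -/
lemma mid_le2 (C : Ctx r l u p) (hπ : IsPi2 r π) {x y : V} (hxy : x ≠ y)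
    (hsafe : ∀ v, v ∉ l.toFinset → ¬(r x v ∧ r v y))
    {w₁ w₂ : V} (hsub : ∀ v, v ∈ l.toFinset → r x v → r v y → v = w₁ ∨ v = w₂) :
    π ≤ 2 := by
  have h := C.mine_gen hπ hxy hsafe
  have h2 : ((l.toFinset).filter fun v => r x v ∧ r v y) ⊆ {w₁, w₂} := by
    intro v hv
    rw [Finset.mem_filter] at hv
    simp only [Finset.mem_insert, Finset.mem_singleton]
    exact hsub v hv.1 hv.2.1 hv.2.2
  have h3 := Finset.card_le_card h2
  have h4 : ({w₁, w₂} : Finset V).card ≤ 2 := Finset.card_insert_le _ _ |>.trans (by simp)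
  omega

/-- Main argument: a nonextendable path with p < 3π+3 is impossible. -/
lemma main (C : Ctx r l u p) (hne : ¬ Extendable r l) (hπ : IsPi2 r π) (hπ1 : 1 ≤ π)
    (hcon : p < 3 * π + 3) : False := by
  classical
  have hT := C.tourn
  rcases Nat.lt_or_ge p 5 with hp4 | hp5
  · exact C.small_p hne hπ hπ1 (by omega)
  set Kt : ℕ → Prop := fun t => ∃ v, v ∉ l.toFinset ∧ (∀ i, i < t → r v (u i)) ∧
    (∀ i, t ≤ i → i < p → r (u i) v) with hKt
  have trioK : ∀ i, 1 ≤ i → i + 3 ≤ p → ¬ Kt (i+1) → ¬ Kt (i+2) → False := by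
    intro i h1 h2 hK1 hK2
    have h3 : 3 * π + 3 ≤ p := by
      refine C.trio hne hπ h1 h2 ?_
      rintro v hv ⟨hh1, hh2⟩
      obtain ⟨t, htp, hlo, hhi⟩ := C.threshold hne hv
      have e1 : ¬ i + 2 < t := fun hc => tasymm hT (hlo _ hc) hh1
      have e2 : ¬ t ≤ i := fun hc => tasymm hT (hhi i hc (by omega)) hh2
      have : t = i + 1 ∨ t = i + 2 := by omega
      rcases this with rfl | rfl
      · exact hK1 ⟨v, hv, hlo, hhi⟩
      · exact hK2 ⟨v, hv, hlo, hhi⟩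
    omega
  set P : ℕ → Prop := fun k => 2 ≤ k ∧ k + 2 ≤ p ∧ Kt k ∧ ∃ a, a + 2 ≤ k ∧ r (u a) (u k)
    with hP
  by_cases hA : ∃ k, P k
  · -- CASE I : some A-type threshold
    haveI : DecidablePred P := Classical.decPred P
    obtain ⟨k', hPk', hk'min⟩ : ∃ k', P k' ∧ ∀ m, m < k' → ¬ P m :=
      ⟨Nat.find hA, Nat.find_spec hA, fun m hm => Nat.find_min hA hm⟩
    obtain ⟨hk2, hkp, ⟨w, hw, hw1, hw2⟩, a₀, ha₀, ha₀r⟩ := hPk'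
    have W : ∀ b, k' + 1 ≤ b → b ≤ p - 1 → r (u b) (u (k'-1)) := by
      intro b hb1 hb2
      have hG := C.Gtmpl hne hw hk2 hkp hw1 hw2 ha₀ hb1 hb2
      rw [not_and] at hG
      exact ttotal hT (C.ne' (by omega) (by omega) (by omega)) (hG ha₀r)
    rcases Nat.lt_or_ge k' 4 with hk'4 | hk'4
    · rcases (show k' = 2 ∨ k' = 3 from by omega) with rfl | rfl
      · obtain ⟨c, hc, hc1, hc2, m1, m2⟩ := C.mid1 hπ hπ1 (show 1 < p by omega)
          (show 2 < p by omega) (by omega) (C.fwd_safe hne (by omega) (by omega))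
        rcases (show c = 0 ∨ c = 1 ∨ c = 2 ∨ 3 ≤ c from by omega) with rfl | rfl | rfl | h3
        · exact tasymm hT (C.arc 0 (by omega)) m1
        · exact hT.1 _ m1
        · exact hT.1 _ m2
        · exact tasymm hT (W c h3 (by omega)) m1
      · rcases Nat.lt_or_ge π 2 with hπ1' | hπ2
        · have hp5' : p = 5 := by omega
          refine C.M5 hne hπ hπ1 hp5' ?_
          have := W 4 (by omega) (by omega)
          simpa using this
        · obtain ⟨c, d, hcp, hdp, hcd, ⟨mc1, mc2⟩, ⟨md1, md2⟩⟩ := C.mid2 hπ hπ2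
            (show 2 < p by omega) (show 3 < p by omega) (by omega)
            (C.fwd_safe hne (by omega) (by omega))
          have hchar : ∀ e, e < p → r (u 2) (u e) → r (u e) (u 3) → e = 0 := by
            intro e he e1 e2
            rcases (show e = 0 ∨ e = 1 ∨ e = 2 ∨ e = 3 ∨ 4 ≤ e from by omega) with
              rfl | rfl | rfl | rfl | h4
            · rfl
            · exact absurd e1 (tasymm hT (C.arc 1 (by omega)))
            · exact absurd e1 (hT.1 _)
            · exact absurd e2 (hT.1 _)
            · exact absurd e1 (tasymm hT (W e (by omega) (by omega)))
          exact hcd ((hchar c hcp mc1 mc2).trans (hchar d hdp md1 md2).symm)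
    · -- k' ≥ 4
      by_cases hK1 : Kt (k'-1)
      · -- distance-1 B–A pair
        obtain ⟨K, hKeq⟩ : ∃ K, K = k' - 1 := ⟨_, rfl⟩
        have hKk' : K + 1 = k' := by omega
        have hnA : ¬ P K := hk'min _ (by omega)
        rw [← hKeq] at hK1
        obtain ⟨wB, hwB, hwB1, hwB2⟩ := hK1
        have BW : ∀ a, a + 2 ≤ K → r (u K) (u a) := by
          intro a ha
          have : ¬ r (u a) (u K) := by
            intro hc
            exact hnA ⟨by omega, by omega, ⟨wB, hwB, hwB1, hwB2⟩, a, ha, hc⟩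
          exact ttotal hT (C.ne' (by omega) (by omega) (by omega)) this
        have WK : ∀ b, K + 2 ≤ b → b < p → r (u b) (u K) := by
          intro b hb1 hb2
          have := W b (by omega) (by omega)
          rwa [show k' - 1 = K from by omega] at this
        have aK : r (u (K-1)) (u K) := by
          have := C.arc (K-1) (by omega)
          rwa [show K - 1 + 1 = K from by omega] at this
        rcases Nat.lt_or_ge π 2 with hπ1' | hπ2
        · have hp5' : p = 5 := by omega
          have hK2' : K = 2 := by omega
          refine C.M5 hne hπ hπ1 hp5' ?_
          have := WK 4 (by omega) (by omega)
          rwa [hK2'] at this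
        · obtain ⟨z₁, hz₁p, hz₁1, hz₁2, n1, n2⟩ := C.mid1 hπ hπ1 (show K < p by omega)
            (show K + 1 < p by omega) (by omega) (C.fwd_safe hne (by omega) (by omega))
          have hz₁K : z₁ + 2 ≤ K := by
            rcases (show z₁ + 2 ≤ K ∨ z₁ = K - 1 ∨ z₁ = K ∨ z₁ = K + 1 ∨ K + 2 ≤ z₁
              from by omega) with h | h | h | h | h
            · exact h
            · exact absurd (h ▸ n1) (tasymm hT aK)
            · exact absurd (h ▸ n1) (hT.1 _)
            · exact absurd (h ▸ n2) (hT.1 _)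
            · exact absurd n1 (tasymm hT (WK z₁ h hz₁p))
          obtain ⟨c, d, hcp, hdp, hcd, ⟨mc1, mc2⟩, ⟨md1, md2⟩⟩ := C.mid2 hπ hπ2
            (show K - 1 < p by omega) (show K < p by omega) (by omega)
            (C.fwd_safe hne (by omega) (by omega))
          have hchar : ∀ e, e < p → r (u (K-1)) (u e) → r (u e) (u K) → K + 2 ≤ e := by
            intro e he e1 e2
            rcases (show e + 2 ≤ K ∨ e = K - 1 ∨ e = K ∨ e = K + 1 ∨ K + 2 ≤ e
              from by omega) with h | h | h | h | h
            · exact absurd e2 (tasymm hT (BW e h))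
            · exact absurd e1 (h ▸ hT.1 _)
            · exact absurd e2 (h ▸ hT.1 _)
            · exact absurd e2 (tasymm hT (h ▸ C.arc K (by omega)))
            · exact h
          have hz₂ : ∃ z₂, z₂ < p ∧ K + 3 ≤ z₂ ∧ r (u (K-1)) (u z₂) := by
            have hc3 := hchar c hcp mc1 mc2
            have hd3 := hchar d hdp md1 md2
            rcases (show K + 3 ≤ c ∨ c = K + 2 from by omega) with h | h
            · exact ⟨c, hcp, h, mc1⟩
            · rcases (show K + 3 ≤ d ∨ d = K + 2 from by omega) with h2 | h2
              · exact ⟨d, hdp, h2, md1⟩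
              · exact absurd (h.trans h2.symm) hcd
          obtain ⟨z₂, hz₂p, hz₂3, hz₂r⟩ := hz₂
          exact C.Td1 hne hwB (by omega) (by omega) hwB1 hwB2 WK hz₁K hz₂3 hz₂p n2 hz₂r
      · -- distance-2 B–A pair
        have hKm : Kt (k'-2) := by
          by_contra hc
          exact trioK (k'-3) (by omega) (by omega)
            (by rwa [show k' - 3 + 1 = k' - 2 from by omega])
            (by rwa [show k' - 3 + 2 = k' - 1 from by omega])
        obtain ⟨K, hKeq⟩ : ∃ K, K = k' - 2 := ⟨_, rfl⟩
        have hKk' : K + 2 = k' := by omega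
        have hnA : ¬ P K := hk'min _ (by omega)
        rw [← hKeq] at hKm
        obtain ⟨wB, hwB, hwB1, hwB2⟩ := hKm
        have BW : ∀ a, a + 2 ≤ K → r (u K) (u a) := by
          intro a ha
          have : ¬ r (u a) (u K) := by
            intro hc
            exact hnA ⟨by omega, by omega, ⟨wB, hwB, hwB1, hwB2⟩, a, ha, hc⟩
          exact ttotal hT (C.ne' (by omega) (by omega) (by omega)) this
        have WK : ∀ b, K + 3 ≤ b → b < p → r (u b) (u (K+1)) := by
          intro b hb1 hb2
          have := W b (by omega) (by omega)
          rwa [show k' - 1 = K + 1 from by omega] at this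
        have aK1 : r (u K) (u (K+1)) := C.arc K (by omega)
        have hπ2 : 2 ≤ π := by omega
        have hsafeKK : ∀ v, v ∉ l.toFinset → ¬(r (u (K+1)) v ∧ r v (u K)) := by
          rintro v hv ⟨e1, e2⟩
          obtain ⟨t, htp, hlo, hhi⟩ := C.threshold hne hv
          have f1 : ¬ K + 1 < t := fun hc => tasymm hT (hlo _ hc) e1
          have f2 : ¬ t ≤ K := fun hc => tasymm hT (hhi K hc (by omega)) e2
          have ht : t = K + 1 := by omega
          refine hK1 ?_
          rw [show k' - 1 = K + 1 from by omega]
          exact ⟨v, hv, ht ▸ hlo, ht ▸ hhi⟩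
        have hcc : r (u (K+1)) (u (K-1)) ∧ r (u (K+2)) (u K) := by
          obtain ⟨c, d, hcp, hdp, hcd, ⟨mc1, mc2⟩, ⟨md1, md2⟩⟩ := C.mid2 hπ hπ2
            (show K + 1 < p by omega) (show K < p by omega) (by omega) hsafeKK
          have hchar0 : ∀ e, e < p → r (u (K+1)) (u e) → r (u e) (u K) →
              e = K - 1 ∨ e = K + 2 := by
            rintro e he e1 e2
            rcases (show e + 2 ≤ K ∨ e = K - 1 ∨ e = K ∨ e = K + 1 ∨ e = K + 2 ∨ K + 3 ≤ e
              from by omega) with h | h | h | h | h | h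
            · exact absurd e2 (tasymm hT (BW e h))
            · exact Or.inl h
            · exact absurd e2 (h ▸ hT.1 _)
            · exact absurd e1 (h ▸ hT.1 _)
            · exact Or.inr h
            · exact absurd e1 (tasymm hT (WK e h he))
          have hpin := pin2 (fun e => e < p ∧ r (u (K+1)) (u e) ∧ r (u e) (u K))
            hcd ⟨hcp, mc1, mc2⟩ ⟨hdp, md1, md2⟩
            (fun e he => hchar0 e he.1 he.2.1 he.2.2)
          exact ⟨hpin.1.2.1, hpin.2.2.2⟩
        obtain ⟨hc1, hc2⟩ := hcc
        have hchar2 : ∀ e, e < p → r (u (K-1)) (u e) → r (u e) (u K) → K + 2 ≤ e := by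
          intro e he e1 e2
          rcases (show e + 2 ≤ K ∨ e = K - 1 ∨ e = K ∨ e = K + 1 ∨ K + 2 ≤ e
            from by omega) with h | h | h | h | h
          · exact absurd e2 (tasymm hT (BW e h))
          · exact absurd e1 (h ▸ hT.1 _)
          · exact absurd e2 (h ▸ hT.1 _)
          · exact absurd e2 (tasymm hT (h ▸ aK1))
          · exact h
        have hz₂ : ∃ z₂, z₂ < p ∧ K + 3 ≤ z₂ ∧ r (u (K-1)) (u z₂) ∧ r (u z₂) (u K) := by
          obtain ⟨c, d, hcp, hdp, hcd, ⟨mc1, mc2⟩, ⟨md1, md2⟩⟩ := C.mid2 hπ hπ2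
            (show K - 1 < p by omega) (show K < p by omega) (by omega)
            (C.fwd_safe hne (by omega) (by omega))
          have hc3 := hchar2 c hcp mc1 mc2
          have hd3 := hchar2 d hdp md1 md2
          rcases (show K + 3 ≤ c ∨ c = K + 2 from by omega) with h | h
          · exact ⟨c, hcp, h, mc1, mc2⟩
          · rcases (show K + 3 ≤ d ∨ d = K + 2 from by omega) with h2 | h2
            · exact ⟨d, hdp, h2, md1, md2⟩
            · exact absurd (h.trans h2.symm) hcd
        obtain ⟨z₂, hz₂p, hz₂3, hz₂a, hz₂b⟩ := hz₂
        have hpK4 : K + 4 ≤ p := by omega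
        have hchar1 : ∀ e, e < p → r (u (K+1)) (u e) → r (u e) (u (K+2)) →
            e + 2 ≤ K ∨ e = K - 1 := by
          intro e he e1 e2
          rcases (show e + 2 ≤ K ∨ e = K - 1 ∨ e = K ∨ e = K + 1 ∨ e = K + 2 ∨ K + 3 ≤ e
            from by omega) with h | h | h | h | h | h
          · exact Or.inl h
          · exact Or.inr h
          · exact absurd e1 (tasymm hT (h ▸ aK1))
          · exact absurd e1 (h ▸ hT.1 _)
          · exact absurd e2 (h ▸ hT.1 _)
          · exact absurd e1 (tasymm hT (WK e h he))
        have hz₁ : ∃ z₁, z₁ < p ∧ z₁ + 2 ≤ K ∧ r (u (K+1)) (u z₁) ∧ r (u z₁) (u (K+2)) := by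
          obtain ⟨c, d, hcp, hdp, hcd, ⟨mc1, mc2⟩, ⟨md1, md2⟩⟩ := C.mid2 hπ hπ2
            (show K + 1 < p by omega) (show K + 2 < p by omega) (by omega)
            (C.fwd_safe hne (by omega) (by omega))
          rcases hchar1 c hcp mc1 mc2 with h | h
          · exact ⟨c, hcp, h, mc1, mc2⟩
          · rcases hchar1 d hdp md1 md2 with h2 | h2
            · exact ⟨d, hdp, h2, md1, md2⟩
            · exact absurd (h.trans h2.symm) hcd
        obtain ⟨z₁, hz₁p, hz₁K, hz₁a, hz₁b⟩ := hz₁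
        by_cases hα : r (u (K-1)) (u (K+3))
        · exact C.Pa hne hwB (by omega) hpK4 hwB1 hwB2 hc2 hz₁K hz₁b hα
        by_cases hβ : r (u (K-2)) (u (K+2))
        · refine C.Pb hne hw (by omega) hpK4 ?_ ?_ hc1 hz₂3 hz₂p hβ hz₂a
          · intro i hi
            exact hw1 i (by omega)
          · intro i hi hip
            exact hw2 i (by omega) hip
        · have hz₂4 : K + 4 ≤ z₂ := by
            rcases (show z₂ = K + 3 ∨ K + 4 ≤ z₂ from by omega) with h | h
            · exact absurd (h ▸ hz₂a) hα
            · exact h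
          have hz₁3 : z₁ + 3 ≤ K := by
            rcases (show z₁ = K - 2 ∨ z₁ + 3 ≤ K from by omega) with h | h
            · exact absurd (h ▸ hz₁b) hβ
            · exact h
          have hπle2 : π ≤ 2 := by
            refine C.mid_le2 hπ (C.ne' (show K + 1 < p by omega) (show K < p by omega)
              (by omega)) hsafeKK (w₁ := u (K-1)) (w₂ := u (K+2)) ?_
            intro v hv e1 e2
            obtain ⟨e, he, rfl⟩ := C.mem_l' (List.mem_toFinset.mp hv)
            rcases (show e + 2 ≤ K ∨ e = K - 1 ∨ e = K ∨ e = K + 1 ∨ e = K + 2 ∨ K + 3 ≤ e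
              from by omega) with h | h | h | h | h | h
            · exact absurd e2 (tasymm hT (BW e h))
            · exact Or.inl (by rw [h])
            · exact absurd e2 (h ▸ hT.1 _)
            · exact absurd e1 (h ▸ hT.1 _)
            · exact Or.inr (by rw [h])
            · exact absurd e1 (tasymm hT (WK e h he))
          have hp8 : p = 8 := by omega
          have hK3 : K = 3 := by omega
          subst hK3
          refine C.Gam hne hπ (by omega) hp8 (by simpa using BW 0 (by omega))
            (by simpa using BW 1 (by omega)) ?_ ?_ (by simpa using hc1) (by simpa using hc2)
            ?_ ?_ ?_ ?_
          · simpa [hp8] using WK 6 (by omega) (by omega)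
          · simpa [hp8] using WK 7 (by omega) (by omega)
          · have := hz₂a
            rw [show z₂ = 7 from by omega] at this
            simpa using this
          · have := hz₂b
            rw [show z₂ = 7 from by omega] at this
            simpa using this
          · have := hz₁a
            rw [show z₁ = 0 from by omega] at this
            simpa using this
          · have := hz₁b
            rw [show z₁ = 0 from by omega] at this
            simpa using this
  · -- CASE II : no A-type threshold
    push_neg at hA
    have hAP : ∀ k, 2 ≤ k → k + 2 ≤ p → Kt k → ∀ a, a + 2 ≤ k → r (u k) (u a) := by
      intro k h1 h2 hk a ha
      have : ¬ r (u a) (u k) := by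
        intro hc
        exact hA k ⟨h1, h2, hk, a, ha, hc⟩
      exact ttotal hT (C.ne' (by omega) (by omega) (by omega)) this
    have hKd : Kt (p-3) ∨ Kt (p-2) := by
      by_contra hno
      push_neg at hno
      exact trioK (p-4) (by omega) (by omega)
        (by rw [show p - 4 + 1 = p - 3 from by omega]; exact hno.1)
        (by rw [show p - 4 + 2 = p - 2 from by omega]; exact hno.2)
    by_cases hK2 : Kt (p-2)
    · have BW := hAP (p-2) (by omega) (by omega) hK2
      obtain ⟨c, hc, hc1, hc2, m1, m2⟩ := C.mid1 hπ hπ1 (show p-3 < p by omega)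
        (show p-2 < p by omega) (by omega) (C.fwd_safe hne (by omega) (by omega))
      rcases (show c + 2 ≤ p-2 ∨ c = p-3 ∨ c = p-2 ∨ c = p-1 from by omega)
        with h | h | h | h
      · exact tasymm hT (BW c h) m2
      · exact hT.1 _ (h ▸ m1)
      · exact hT.1 _ (h ▸ m2)
      · have harc := C.arc (p-2) (by omega)
        rw [show p - 2 + 1 = p - 1 from by omega] at harc
        exact tasymm hT harc (h ▸ m2)
    · have hK3 : Kt (p-3) := hKd.resolve_right hK2
      have BW := hAP (p-3) (by omega) (by omega) hK3
      have apm : r (u (p-4)) (u (p-3)) := by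
        have := C.arc (p-4) (by omega)
        rwa [show p - 4 + 1 = p - 3 from by omega] at this
      have apm1 : r (u (p-3)) (u (p-2)) := by
        have := C.arc (p-3) (by omega)
        rwa [show p - 3 + 1 = p - 2 from by omega] at this
      have hchar : ∀ e, e < p → r (u (p-4)) (u e) → r (u e) (u (p-3)) → e = p-1 := by
        intro e he e1 e2
        rcases (show e + 2 ≤ p-3 ∨ e = p-4 ∨ e = p-3 ∨ e = p-2 ∨ e = p-1 from by omega)
          with h | h | h | h | h
        · exact absurd e2 (tasymm hT (BW e h))
        · exact absurd e1 (h ▸ hT.1 _)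
        · exact absurd e2 (h ▸ hT.1 _)
        · exact absurd e2 (tasymm hT (h ▸ apm1))
        · exact h
      rcases Nat.lt_or_ge π 2 with hπ1' | hπ2
      · have hp5' : p = 5 := by omega
        obtain ⟨c, hc, hc1, hc2, m1, m2⟩ := C.mid1 hπ hπ1 (show 1 < p by omega)
          (show 2 < p by omega) (by omega) (C.fwd_safe hne (by omega) (by omega))
        have harc01 := C.arc 0 (by omega)
        have harc23 := C.arc 2 (by omega)
        rcases (show c = 0 ∨ c = 3 ∨ c = 4 from by omega) with rfl | rfl | rfl
        · exact tasymm hT harc01 m1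
        · exact tasymm hT harc23 m2
        · exact C.M5 hne hπ hπ1 hp5' m2
      · obtain ⟨c, d, hcp, hdp, hcd, ⟨mc1, mc2⟩, ⟨md1, md2⟩⟩ := C.mid2 hπ hπ2
          (show p - 4 < p by omega) (show p - 3 < p by omega) (by omega)
          (C.fwd_safe hne (by omega) (by omega))
        exact hcd ((hchar c hcp mc1 mc2).trans (hchar d hdp md1 md2).symm)

end Ctx

end S9

theorem stmt9 (r : V → V → Prop) [DecidableRel r] (hT : IsTournament r)
    (π : ℕ) (hπ : IsPi2 r π) (hπ1 : 1 ≤ π)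
    (l : List V) (hl : IsDirPath r l) (hlen : 2 ≤ l.length)
    (hne : ¬ Extendable r l) :
    3 * π + 3 ≤ l.length := by
  by_contra hlt
  push_neg at hlt
  obtain ⟨hnd, hch⟩ := hl
  have hl0 : l ≠ [] := by rintro rfl; simp at hlen
  set u : ℕ → V := fun i => l.getD i (l.head hl0) with hu
  have hgetD : ∀ (i : ℕ) (hi : i < l.length), u i = l[i]'hi := by
    intro i hi
    rw [hu]
    simp only
    rw [List.getD_eq_getElem?_getD, List.getElem?_eq_getElem hi]
    rfl
  have hform : l = (List.range' 0 l.length).map u := by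
    apply List.ext_getElem?
    intro i
    rw [List.getElem?_map]
    by_cases h : i < l.length
    · rw [List.getElem?_eq_getElem h, List.getElem?_range' (s := 0) (step := 1) h]
      simp only [Option.map_some]
      rw [show 0 + 1 * i = i from by omega, hgetD i h]
    · rw [List.getElem?_eq_none (by omega), List.getElem?_eq_none (by simp; omega)]
      rfl
  have harc : ∀ i, i + 1 < l.length → r (u i) (u (i+1)) := by
    intro i hi
    have h := List.isChain_iff_getElem.mp hch i (by omega)
    rw [hgetD i (by omega), hgetD (i+1) (by omega)]
    exact h
  have C : S9.Ctx r l u l.length :=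
    ⟨hT, hform, hnd, harc, hlen⟩
  exact (C.main hne hπ hπ1 hlt).elim
end

section
/- Let T be a tournament, P = u₀u₁…u_{p−1} a non-extendable path in T with p ≥ 4, and suppose there exists a vertex w ∉ V(P) and an index k with 1 ≤ k ≤ p−3 such that u_j → w for all k+1 ≤ j ≤ p−2 and w → u_i for all 1 ≤ i ≤ k (i.e., the subpath u₁…u_{p−2} has a hybrid vertex). Then the number h(P) of hybrid vertices of P satisfies h(P) ≤ i(T) + 2. -/
open Finset

variable {V : Type*} [Fintype V] [DecidableEq V]

set_option linter.unusedSectionVars false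

section AuxStmt10

lemma extend_insert (r : V → V → Prop) {l : List V} (hl : IsDirPath r l)
    {x : V} (hx : x ∉ l.toFinset) {a : ℕ} (ha : a + 1 < l.length)
    (h1 : r (l.get ⟨a, Nat.lt_of_succ_lt ha⟩) x) (h2 : r x (l.get ⟨a + 1, ha⟩)) :
    Extendable r l := by
  have hlnil : l ≠ [] := by intro h; subst h; simp at ha
  have hperm : (l.take (a+1) ++ x :: l.drop (a+1)).Perm (x :: l) := by
    simpa [List.take_append_drop] using
      (List.perm_middle (a := x) (l₁ := l.take (a+1)) (l₂ := l.drop (a+1)))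
  have h3 : (l.drop (a+1)).getLast? = l.getLast? := by
    rw [List.getLast?_eq_getElem?, List.getLast?_eq_getElem?, List.length_drop, List.getElem?_drop]
    congr 1; omega
  refine ⟨x, hx, l.take (a+1) ++ x :: l.drop (a+1), ?_, ?_, ?_, ?_⟩
  · constructor
    · exact hperm.symm.nodup (List.nodup_cons.2 ⟨by simpa using hx, hl.1⟩)
    · show List.IsChain r _
      rw [List.isChain_append]
      refine ⟨hl.2.infix ⟨[], l.drop (a+1), by simp⟩, ?_, ?_⟩
      · rw [List.isChain_cons]
        refine ⟨?_, hl.2.infix ⟨l.take (a+1), [], by simp⟩⟩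
        intro y hy
        have : (l.drop (a+1)).head? = some (l.get ⟨a+1, ha⟩) := by
          rw [List.head?_drop, List.getElem?_eq_getElem ha]; rfl
        rw [this] at hy
        cases hy; exact h2
      · intro y hy z hz
        have hlen : (l.take (a+1)).length = a + 1 := by
          rw [List.length_take]; omega
        have : (l.take (a+1)).getLast? = some (l.get ⟨a, Nat.lt_of_succ_lt ha⟩) := by
          rw [List.getLast?_eq_getElem? , hlen]
          simp only [Nat.add_sub_cancel]
          rw [List.getElem?_take_of_lt (by omega)]; exact List.getElem?_eq_getElem (Nat.lt_of_succ_lt ha)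
        rw [this] at hy
        cases hy
        simp only [List.head?_cons, Option.mem_def, Option.some.injEq] at hz
        subst hz; exact h1
  · rw [List.head?_append_of_ne_nil, List.head?_take]
    · simp
    · simp [List.take_eq_nil_iff, hlnil]
  · have heq : (l.take (a+1) ++ x :: l.drop (a+1)) = (l.take (a+1) ++ [x]) ++ l.drop (a+1) := by
      simp
    rw [heq, List.getLast?_append, h3]
    cases h4 : l.getLast? with
    | none => simp [List.getLast?_eq_none_iff] at h4; exact absurd h4 hlnil
    | some y => simp
  · rw [List.toFinset_eq_of_perm _ _ hperm, List.toFinset_cons]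

lemma tourn_flip {r : V → V → Prop} (hT : IsTournament r) {x y : V} (hxy : x ≠ y)
    (h : ¬ r x y) : r y x := by
  rcases hT.2 x y hxy with ⟨h1, _⟩ | ⟨h1, _⟩
  · exact absurd h1 h
  · exact h1

lemma tourn_asymm {r : V → V → Prop} (hT : IsTournament r) {x y : V} (h : r x y) :
    ¬ r y x := by
  by_cases hxy : x = y
  · subst hxy; exact absurd h (hT.1 x)
  · rcases hT.2 x y hxy with ⟨_, h2⟩ | ⟨h1, _⟩
    · exact h2
    · exact fun _ => (hT.2 x y hxy).elim (fun ⟨_, h2⟩ => h2 h1) (fun ⟨_, h2⟩ => h2 h)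

lemma hybrid_to_head {r : V → V → Prop} (hT : IsTournament r) {l : List V}
    (hl : IsDirPath r l) (hne : ¬ Extendable r l) {x : V} (hx : x ∉ l.toFinset)
    (hex : ∃ y ∈ l, r x y) (h0 : 0 < l.length) :
    r x (l.get ⟨0, h0⟩) := by
  classical
  set J : Finset (Fin l.length) := univ.filter (fun j => r x (l.get j)) with hJ
  have hJne : J.Nonempty := by
    obtain ⟨y, hy, hr⟩ := hex
    obtain ⟨j, hj⟩ := List.mem_iff_get.1 hy
    refine ⟨j, ?_⟩
    rw [hJ, mem_filter]
    exact ⟨mem_univ _, hj ▸ hr⟩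
  set j0 := J.min' hJne with hj0
  have hj0J : j0 ∈ J := J.min'_mem hJne
  have hrj0 : r x (l.get j0) := by
    rw [hJ, mem_filter] at hj0J; exact hj0J.2
  have : (j0 : ℕ) = 0 := by
    by_contra hne0
    have h1 : 1 ≤ (j0 : ℕ) := Nat.one_le_iff_ne_zero.2 hne0
    have hprev : ((j0 : ℕ) - 1) + 1 < l.length := by
      have := j0.2; omega
    set jp : Fin l.length := ⟨(j0 : ℕ) - 1, Nat.lt_of_succ_lt hprev⟩ with hjp
    have hjpnot : jp ∉ J := by
      intro hmem
      have h2 : (j0 : ℕ) ≤ (j0 : ℕ) - 1 := J.min'_le jp hmem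
      omega
    have hnr : ¬ r x (l.get jp) := by
      intro hr; exact hjpnot (by rw [hJ, mem_filter]; exact ⟨mem_univ _, hr⟩)
    have hxne : x ≠ l.get jp := by
      intro h; apply hx; rw [h]
      exact List.mem_toFinset.2 (List.get_mem l jp)
    have hr1 : r (l.get jp) x := tourn_flip hT hxne hnr
    have hget : l.get ⟨(j0:ℕ) - 1 + 1, hprev⟩ = l.get j0 := by
      apply congrArg; apply Fin.ext; show (j0:ℕ) - 1 + 1 = (j0:ℕ); omega
    exact hne (extend_insert r hl hx hprev hr1 (hget ▸ hrj0))
  have : j0 = ⟨0, h0⟩ := Fin.ext this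
  rwa [this] at hrj0

lemma last_to_hybrid {r : V → V → Prop} (hT : IsTournament r) {l : List V}
    (hl : IsDirPath r l) (hne : ¬ Extendable r l) {x : V} (hx : x ∉ l.toFinset)
    (hex : ∃ y ∈ l, r y x) (h0 : 0 < l.length) :
    r (l.get ⟨l.length - 1, by omega⟩) x := by
  classical
  set J : Finset (Fin l.length) := univ.filter (fun j => r (l.get j) x) with hJ
  have hJne : J.Nonempty := by
    obtain ⟨y, hy, hr⟩ := hex
    obtain ⟨j, hj⟩ := List.mem_iff_get.1 hy
    refine ⟨j, ?_⟩
    rw [hJ, mem_filter]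
    exact ⟨mem_univ _, hj ▸ hr⟩
  set j0 := J.max' hJne with hj0
  have hj0J : j0 ∈ J := J.max'_mem hJne
  have hrj0 : r (l.get j0) x := by
    rw [hJ, mem_filter] at hj0J; exact hj0J.2
  have : (j0 : ℕ) = l.length - 1 := by
    by_contra hne0
    have hprev : (j0 : ℕ) + 1 < l.length := by
      have := j0.2; omega
    set jn : Fin l.length := ⟨(j0 : ℕ) + 1, hprev⟩ with hjn
    have hjnnot : jn ∉ J := by
      intro hmem
      have h2 : (j0 : ℕ) + 1 ≤ (j0 : ℕ) := J.le_max' jn hmem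
      omega
    have hnr : ¬ r (l.get jn) x := by
      intro hr; exact hjnnot (by rw [hJ, mem_filter]; exact ⟨mem_univ _, hr⟩)
    have hxne : l.get jn ≠ x := by
      intro h; apply hx; rw [← h]
      exact List.mem_toFinset.2 (List.get_mem l jn)
    have hr1 : r x (l.get jn) := tourn_flip hT hxne hnr
    have hget : l.get ⟨(j0:ℕ), Nat.lt_of_succ_lt hprev⟩ = l.get j0 := by congr 1
    exact hne (extend_insert r hl hx hprev (hget ▸ hrj0) hr1)
  have : j0 = ⟨l.length - 1, by omega⟩ := Fin.ext this
  rwa [this] at hrj0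

lemma no_cross (r : V → V → Prop)
    {l : List V} (hp : 4 ≤ l.length) (hl : IsDirPath r l) (hne : ¬ Extendable r l)
    {w : V} (hw : w ∉ l.toFinset) {k : ℕ} (hk1 : 1 ≤ k) (hk2 : k ≤ l.length - 3)
    (hdomw : ∀ j (hj : j < l.length), k + 1 ≤ j → j ≤ l.length - 2 →
      r (l.get ⟨j, hj⟩) w)
    (hwdom : ∀ j (hj : j < l.length), 1 ≤ j → j ≤ k → r w (l.get ⟨j, hj⟩))
    {j : ℕ} (hj1 : 1 ≤ j) (hj3 : j ≤ l.length - 3)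
    (hA : r (l.get ⟨0, by omega⟩) (l.get ⟨j + 1, by omega⟩))
    (hB : r (l.get ⟨j, by omega⟩) (l.get ⟨l.length - 1, by omega⟩)) :
    False := by
  classical
  set p := l.length with hp'
  have hjp : j + 1 < p - 1 := by omega
  have h0lt : 0 < l.length := by omega
  have h1lt : 1 < l.length := by omega
  have hjlt : j < l.length := by omega
  have hj1lt : j + 1 < l.length := by omega
  have hp1lt : p - 1 < l.length := by omega
  have hp2lt : p - 2 < l.length := by omega
  set s1 : List V := (l.take (p-1)).drop (j+1) with hs1
  set s2 : List V := (l.take (j+1)).drop 1 with hs2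
  -- basic segment facts
  have hs0 : l.take 1 = [l.get ⟨0, h0lt⟩] := by
    have h1 : (1 : ℕ) = 0 + 1 := rfl
    rw [h1, List.take_succ, List.take_zero, List.getElem?_eq_getElem (by omega : 0 < l.length)]
    simp [List.get_eq_getElem]
  have hs3 : l.drop (p-1) = [l.get ⟨p-1, hp1lt⟩] := by
    rw [List.drop_eq_getElem_cons (by omega : p - 1 < l.length)]
    have : p - 1 + 1 = l.length := by omega
    rw [this, List.drop_length]
    rfl
  have hs1head : s1.head? = some (l.get ⟨j+1, hj1lt⟩) := by
    rw [hs1, List.head?_drop, List.getElem?_take]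
    rw [if_pos hjp, List.getElem?_eq_getElem (by omega : j + 1 < l.length)]
    simp [List.get_eq_getElem]
  have hs1len : s1.length = p - 1 - (j+1) := by
    rw [hs1, List.length_drop, List.length_take]; omega
  have hs1last : s1.getLast? = some (l.get ⟨p-2, hp2lt⟩) := by
    rw [List.getLast?_eq_getElem?, hs1len]
    rw [hs1, List.getElem?_drop, List.getElem?_take_of_lt (by omega), List.getElem?_eq_getElem (by omega : j + 1 + (p - 1 - (j+1) - 1) < l.length)]
    congr 1
    exact congrArg l.get (by apply Fin.ext; show j + 1 + (p - 1 - (j+1) - 1) = p - 2; omega)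
  have hs2head : s2.head? = some (l.get ⟨1, h1lt⟩) := by
    rw [hs2, List.head?_drop, List.getElem?_take]
    rw [if_pos (by omega : 1 < j + 1), List.getElem?_eq_getElem (by omega : 1 < l.length)]
    simp [List.get_eq_getElem]
  have hs2len : s2.length = j := by
    rw [hs2, List.length_drop, List.length_take]; omega
  have hs2last : s2.getLast? = some (l.get ⟨j, hjlt⟩) := by
    rw [List.getLast?_eq_getElem?]
    rw [hs2len]
    rw [hs2, List.getElem?_drop, List.getElem?_take_of_lt (by omega : 1 + (j-1) < j + 1), List.getElem?_eq_getElem (by omega : 1 + (j - 1) < l.length)]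
    congr 1
    exact congrArg l.get (by apply Fin.ext; show 1 + (j - 1) = j; omega)
  -- decomposition of l
  have hdec : l = l.take 1 ++ (s2 ++ (s1 ++ l.drop (p-1))) := by
    have e1 : l.take 1 ++ s2 = l.take (j+1) := by
      conv_rhs => rw [← List.take_append_drop 1 (l.take (j+1))]
      rw [List.take_take]
      have hmin : min 1 (j+1) = 1 := by omega
      rw [hmin, hs2]
    have e2 : l.take (j+1) ++ s1 = l.take (p-1) := by
      conv_rhs => rw [← List.take_append_drop (j+1) (l.take (p-1))]
      rw [List.take_take]
      have hmin : min (j+1) (p-1) = j+1 := by omega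
      rw [hmin, hs1]
    calc l = l.take (p-1) ++ l.drop (p-1) := (List.take_append_drop _ _).symm
    _ = (l.take (j+1) ++ s1) ++ l.drop (p-1) := by rw [e2]
    _ = ((l.take 1 ++ s2) ++ s1) ++ l.drop (p-1) := by rw [e1]
    _ = l.take 1 ++ (s2 ++ (s1 ++ l.drop (p-1))) := by simp [List.append_assoc]
  set l' : List V := l.take 1 ++ (s1 ++ (w :: (s2 ++ l.drop (p-1)))) with hl'
  have hperm : l'.Perm (w :: l) := by
    rw [← Multiset.coe_eq_coe]
    conv_rhs => rw [hdec]
    simp only [hl', ← Multiset.coe_add, ← Multiset.cons_coe, ← Multiset.singleton_add]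
    ac_rfl
  apply hne
  refine ⟨w, hw, l', ?_, ?_, ?_, ?_⟩
  · constructor
    · exact hperm.symm.nodup (List.nodup_cons.2 ⟨by simpa using hw, hl.1⟩)
    · rw [hl']
      show List.IsChain r _
      rw [List.isChain_append]
      refine ⟨(hl.2.infix (List.take_prefix _ _).isInfix), ?_, ?_⟩
      · rw [List.isChain_append]
        refine ⟨(hl.2.infix (List.take_prefix _ _).isInfix).infix (List.drop_suffix _ _).isInfix, ?_, ?_⟩
        · rw [List.isChain_cons]
          constructor
          · intro y hy
            rw [List.head?_append, hs2head] at hy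
            simp only [Option.mem_def, Option.some_or, Option.some.injEq] at hy
            subst hy
            exact hwdom 1 (by omega) le_rfl hk1
          · rw [List.isChain_append]
            refine ⟨(hl.2.infix (List.take_prefix _ _).isInfix).infix (List.drop_suffix _ _).isInfix,
              hl.2.infix (List.drop_suffix _ _).isInfix, ?_⟩
            intro y hy z hz
            rw [hs2last] at hy
            rw [hs3] at hz
            simp only [Option.mem_def, Option.some.injEq, List.head?_cons] at hy hz
            subst hy; subst hz
            exact hB
        · intro y hy z hz
          rw [hs1last] at hy
          simp only [Option.mem_def, Option.some.injEq, List.head?_cons] at hy hz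
          subst hy; subst hz
          exact hdomw (p-2) (by omega) (by omega) (by omega)
      · intro y hy z hz
        rw [hs0] at hy
        rw [List.head?_append, hs1head] at hz
        simp only [List.getLast?_singleton, Option.mem_def, Option.some.injEq,
          Option.some_or] at hy hz
        subst hy; subst hz
        exact hA
  · rw [List.head?_append_of_ne_nil _ (by rw [hs0]; simp)]
    rw [hs0]
    have h2 : l.head? = some (l.get ⟨0, by omega⟩) := by
      exact List.head?_eq_getElem?.trans (List.getElem?_eq_getElem (by omega : 0 < l.length))
    rw [h2, List.head?_cons]
  · have : l' = (l.take 1 ++ (s1 ++ (w :: s2))) ++ l.drop (p-1) := by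
      rw [hl']; simp [List.append_assoc]
    rw [this, List.getLast?_append, hs3]
    rw [List.getLast?_eq_getElem? (l := l), List.getElem?_eq_getElem (show l.length - 1 < l.length by omega)]
    simp
    rfl
  · rw [List.toFinset_eq_of_perm _ _ hperm, List.toFinset_cons]

end AuxStmt10

theorem stmt10 (r : V → V → Prop) [DecidableRel r] (hT : IsTournament r)
    (i : ℕ) (hi : IsIrreg r i)
    (l : List V) (hp : 4 ≤ l.length) (hl : IsDirPath r l) (hne : ¬ Extendable r l)
    (w : V) (hw : w ∉ l.toFinset) (k : ℕ) (hk1 : 1 ≤ k) (hk2 : k ≤ l.length - 3)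
    (hdomw : ∀ j (hj : j < l.length), k + 1 ≤ j → j ≤ l.length - 2 →
      r (l.get ⟨j, hj⟩) w)
    (hwdom : ∀ j (hj : j < l.length), 1 ≤ j → j ≤ k → r w (l.get ⟨j, hj⟩)) :
    (Finset.univ.filter fun x => x ∉ l.toFinset ∧
      (∃ y ∈ l, r y x) ∧ (∃ y ∈ l, r x y)).card ≤ i + 2 := by
  classical
  set p := l.length with hp'
  have h0lt : 0 < l.length := by omega
  have hplt : p - 1 < l.length := by omega
  set u0 : V := l.get ⟨0, h0lt⟩ with hu0
  set z : V := l.get ⟨p - 1, hplt⟩ with hz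
  have hgetinj : Function.Injective l.get := List.nodup_iff_injective_get.1 hl.1
  set F : Finset V := (Finset.univ.filter fun x => x ∉ l.toFinset ∧
      (∃ y ∈ l, r y x) ∧ (∃ y ∈ l, r x y)) with hF
  set A : Finset V := (Finset.univ.filter fun x => x ∉ l.toFinset ∧ ∀ y ∈ l, r x y) with hA
  set B : Finset V := (Finset.univ.filter fun x => x ∉ l.toFinset ∧ ∀ y ∈ l, r y x) with hB
  set Sout0 : Finset (Fin p) := Finset.univ.filter (fun q => r u0 (l.get q)) with hSout0
  set Sin0 : Finset (Fin p) := Finset.univ.filter (fun q => r (l.get q) u0) with hSin0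
  set Sout1 : Finset (Fin p) := Finset.univ.filter (fun q => r z (l.get q)) with hSout1
  set Sin1 : Finset (Fin p) := Finset.univ.filter (fun q => r (l.get q) z) with hSin1
  -- generic: in/out index sets partition
  have hpartition : ∀ (v : V) (qv : Fin p), l.get qv = v →
      (Finset.univ.filter (fun q => r (l.get q) v)).card
        + (Finset.univ.filter (fun q => r v (l.get q))).card = p - 1 := by
    intro v qv hqv
    have hdis : Disjoint (Finset.univ.filter (fun q => r (l.get q) v))
        (Finset.univ.filter (fun q => r v (l.get q))) := by
      rw [Finset.disjoint_left]
      intro q hq1 hq2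
      rw [Finset.mem_filter] at hq1 hq2
      exact tourn_asymm hT hq1.2 hq2.2
    have hunion : (Finset.univ.filter (fun q => r (l.get q) v))
        ∪ (Finset.univ.filter (fun q => r v (l.get q))) = Finset.univ.erase qv := by
      apply Finset.ext
      intro q
      simp only [Finset.mem_union, Finset.mem_filter, Finset.mem_univ, true_and,
        Finset.mem_erase, and_true]
      constructor
      · rintro (h | h)
        · intro hqq; subst hqq; rw [hqv] at h; exact tourn_asymm hT h h
        · intro hqq; subst hqq; rw [hqv] at h; exact tourn_asymm hT h h
      · intro hqq
        have hne' : l.get q ≠ v := by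
          rw [← hqv]; intro hh; exact hqq (hgetinj hh)
        by_cases hc : r (l.get q) v
        · exact Or.inl hc
        · exact Or.inr (tourn_flip hT hne' hc)
    rw [← Finset.card_union_of_disjoint hdis, hunion, Finset.card_erase_of_mem (Finset.mem_univ _)]
    simp [hp']
  have e5 : Sin0.card + Sout0.card = p - 1 := hpartition u0 ⟨0, h0lt⟩ rfl
  have e6 : Sin1.card + Sout1.card = p - 1 := hpartition z ⟨p - 1, hplt⟩ rfl
  -- the shift map
  have e7 : Sout0.card + Sin1.card ≤ p + 1 := by
    have h1p : (1 : ℕ) < p := by omega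
    set sigma : Fin p → Fin p := fun q => if h : q.1 + 1 < p then ⟨q.1 + 1, h⟩ else q
      with hsigma
    have hSin1bound : ∀ q ∈ Sin1, q.1 + 1 < p := by
      intro q hq
      rw [hSin1, Finset.mem_filter] at hq
      by_contra hc
      have hq1 : q.1 = p - 1 := by have := q.2; omega
      have : q = ⟨p - 1, hplt⟩ := Fin.ext hq1
      rw [this] at hq
      exact tourn_asymm hT hq.2 hq.2
    have hinj : Set.InjOn sigma Sin1 := by
      intro q hq q' hq' heq
      have h1 := hSin1bound q hq
      have h2 := hSin1bound q' hq'
      rw [hsigma] at heq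
      simp only [dif_pos h1, dif_pos h2] at heq
      have : q.1 + 1 = q'.1 + 1 := congrArg Fin.val heq
      exact Fin.ext (by omega)
    have hcardim : (Sin1.image sigma).card = Sin1.card :=
      Finset.card_image_of_injOn hinj
    have hsub1 : Sout0 ∪ Sin1.image sigma ⊆ Finset.univ.erase ⟨0, h0lt⟩ := by
      intro m hm
      rw [Finset.mem_erase]
      refine ⟨?_, Finset.mem_univ _⟩
      rcases Finset.mem_union.1 hm with hm' | hm'
      · rw [hSout0, Finset.mem_filter] at hm'
        intro hc; subst hc
        exact tourn_asymm hT hm'.2 hm'.2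
      · rcases Finset.mem_image.1 hm' with ⟨q, hq, rfl⟩
        have h1 := hSin1bound q hq
        rw [hsigma]
        simp only [dif_pos h1]
        intro hc
        have : q.1 + 1 = 0 := congrArg Fin.val hc
        omega
    have hsub2 : Sout0 ∩ Sin1.image sigma ⊆ {⟨1, h1p⟩, ⟨p - 1, hplt⟩} := by
      intro m hm
      rw [Finset.mem_inter] at hm
      obtain ⟨hm1, hm2⟩ := hm
      rw [Finset.mem_insert, Finset.mem_singleton]
      by_contra hc
      push_neg at hc
      obtain ⟨hc1, hc2⟩ := hc
      rcases Finset.mem_image.1 hm2 with ⟨q, hq, hqm⟩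
      have h1 := hSin1bound q hq
      rw [hsigma] at hqm
      simp only [dif_pos h1] at hqm
      have hm1' : m.1 = q.1 + 1 := by rw [← hqm]
      have hq1 : 1 ≤ q.1 := by
        by_contra hh
        exact hc1 (Fin.ext (show m.1 = 1 by omega))
      have hq3 : q.1 ≤ p - 3 := by
        by_contra hh
        have : m.1 = p - 1 := by have := q.2; have := m.2; omega
        exact hc2 (Fin.ext this)
      rw [hSout0, Finset.mem_filter] at hm1
      rw [hSin1, Finset.mem_filter] at hq
      have hA' : r (l.get ⟨0, by omega⟩) (l.get ⟨q.1 + 1, by omega⟩) := by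
        have : m = ⟨q.1 + 1, by omega⟩ := Fin.ext hm1'
        rw [this] at hm1
        exact hm1.2
      have hB' : r (l.get ⟨q.1, by omega⟩) (l.get ⟨l.length - 1, by omega⟩) := by
        have : q = ⟨q.1, q.2⟩ := Fin.ext rfl
        exact hq.2
      exact no_cross r hp hl hne hw hk1 hk2 hdomw hwdom hq1 hq3 hA' hB'
    have hc1 : (Sout0 ∪ Sin1.image sigma).card ≤ p - 1 := by
      calc (Sout0 ∪ Sin1.image sigma).card ≤ (Finset.univ.erase (⟨0, h0lt⟩ : Fin p)).card :=
            Finset.card_le_card hsub1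
        _ = p - 1 := by
            rw [Finset.card_erase_of_mem (Finset.mem_univ _)]
            simp
    have hc2 : (Sout0 ∩ Sin1.image sigma).card ≤ 2 := by
      calc (Sout0 ∩ Sin1.image sigma).card
          ≤ ({⟨1, h1p⟩, ⟨p - 1, hplt⟩} : Finset (Fin p)).card := Finset.card_le_card hsub2
        _ ≤ 2 := Finset.card_insert_le _ _ |>.trans (by simp)
    have := Finset.card_union_add_card_inter Sout0 (Sin1.image sigma)
    omega
  -- degree bounds
  have e1 : F.card + A.card + Sin0.card ≤ inDeg r u0 := by
    have hI : (Sin0.image l.get).card = Sin0.card := Finset.card_image_of_injective _ hgetinj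
    have hsub : F ∪ A ∪ Sin0.image l.get ⊆ Finset.univ.filter (fun v => r v u0) := by
      intro x hx'
      rw [Finset.mem_filter]
      refine ⟨Finset.mem_univ _, ?_⟩
      rcases Finset.mem_union.1 hx' with hx' | hx'
      · rcases Finset.mem_union.1 hx' with hx' | hx'
        · rw [hF, Finset.mem_filter] at hx'
          exact hybrid_to_head hT hl hne hx'.2.1 hx'.2.2.2 h0lt
        · rw [hA, Finset.mem_filter] at hx'
          exact hx'.2.2 u0 (List.get_mem l ⟨0, h0lt⟩)
      · rcases Finset.mem_image.1 hx' with ⟨q, hq, rfl⟩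
        rw [hSin0, Finset.mem_filter] at hq
        exact hq.2
    have hd1 : Disjoint F A := by
      rw [Finset.disjoint_left]
      intro x hx1 hx2
      rw [hF, Finset.mem_filter] at hx1
      rw [hA, Finset.mem_filter] at hx2
      obtain ⟨y, hy, hry⟩ := hx1.2.2.1
      exact tourn_asymm hT (hx2.2.2 y hy) hry
    have hd2 : Disjoint (F ∪ A) (Sin0.image l.get) := by
      rw [Finset.disjoint_left]
      intro x hx1 hx2
      rcases Finset.mem_image.1 hx2 with ⟨q, _, rfl⟩
      rcases Finset.mem_union.1 hx1 with hx' | hx'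
      · rw [hF, Finset.mem_filter] at hx'
        exact hx'.2.1 (List.mem_toFinset.2 (List.get_mem l q))
      · rw [hA, Finset.mem_filter] at hx'
        exact hx'.2.1 (List.mem_toFinset.2 (List.get_mem l q))
    calc F.card + A.card + Sin0.card = (F ∪ A ∪ Sin0.image l.get).card := by
          rw [Finset.card_union_of_disjoint hd2, Finset.card_union_of_disjoint hd1, hI]
      _ ≤ _ := Finset.card_le_card hsub
  have e2 : outDeg r u0 ≤ B.card + Sout0.card := by
    have hI : (Sout0.image l.get).card = Sout0.card := Finset.card_image_of_injective _ hgetinj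
    have hsub : Finset.univ.filter (fun v => r u0 v) ⊆ B ∪ Sout0.image l.get := by
      intro x hx'
      rw [Finset.mem_filter] at hx'
      have hr := hx'.2
      by_cases hmem : x ∈ l.toFinset
      · obtain ⟨q, hq⟩ := List.mem_iff_get.1 (List.mem_toFinset.1 hmem)
        refine Finset.mem_union_right _ (Finset.mem_image.2 ⟨q, ?_, hq⟩)
        rw [hSout0, Finset.mem_filter]
        exact ⟨Finset.mem_univ _, hq ▸ hr⟩
      · apply Finset.mem_union_left
        rw [hB, Finset.mem_filter]
        refine ⟨Finset.mem_univ _, hmem, ?_⟩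
        have hnz : ¬ ∃ y ∈ l, r x y := by
          intro hex
          exact tourn_asymm hT hr (hybrid_to_head hT hl hne hmem hex h0lt)
        intro y hy
        refine tourn_flip hT (fun hh => hmem (hh ▸ List.mem_toFinset.2 hy)) ?_
        exact fun hrxy => hnz ⟨y, hy, hrxy⟩
    calc outDeg r u0 ≤ (B ∪ Sout0.image l.get).card := Finset.card_le_card hsub
      _ ≤ B.card + (Sout0.image l.get).card := Finset.card_union_le _ _
      _ = B.card + Sout0.card := by rw [hI]
  have e3 : F.card + B.card + Sout1.card ≤ outDeg r z := by
    have hI : (Sout1.image l.get).card = Sout1.card := Finset.card_image_of_injective _ hgetinj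
    have hsub : F ∪ B ∪ Sout1.image l.get ⊆ Finset.univ.filter (fun v => r z v) := by
      intro x hx'
      rw [Finset.mem_filter]
      refine ⟨Finset.mem_univ _, ?_⟩
      rcases Finset.mem_union.1 hx' with hx' | hx'
      · rcases Finset.mem_union.1 hx' with hx' | hx'
        · rw [hF, Finset.mem_filter] at hx'
          exact last_to_hybrid hT hl hne hx'.2.1 hx'.2.2.1 h0lt
        · rw [hB, Finset.mem_filter] at hx'
          exact hx'.2.2 z (List.get_mem l ⟨p - 1, hplt⟩)
      · rcases Finset.mem_image.1 hx' with ⟨q, hq, rfl⟩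
        rw [hSout1, Finset.mem_filter] at hq
        exact hq.2
    have hd1 : Disjoint F B := by
      rw [Finset.disjoint_left]
      intro x hx1 hx2
      rw [hF, Finset.mem_filter] at hx1
      rw [hB, Finset.mem_filter] at hx2
      obtain ⟨y, hy, hry⟩ := hx1.2.2.2
      exact tourn_asymm hT (hx2.2.2 y hy) hry
    have hd2 : Disjoint (F ∪ B) (Sout1.image l.get) := by
      rw [Finset.disjoint_left]
      intro x hx1 hx2
      rcases Finset.mem_image.1 hx2 with ⟨q, _, rfl⟩
      rcases Finset.mem_union.1 hx1 with hx' | hx'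
      · rw [hF, Finset.mem_filter] at hx'
        exact hx'.2.1 (List.mem_toFinset.2 (List.get_mem l q))
      · rw [hB, Finset.mem_filter] at hx'
        exact hx'.2.1 (List.mem_toFinset.2 (List.get_mem l q))
    calc F.card + B.card + Sout1.card = (F ∪ B ∪ Sout1.image l.get).card := by
          rw [Finset.card_union_of_disjoint hd2, Finset.card_union_of_disjoint hd1, hI]
      _ ≤ _ := Finset.card_le_card hsub
  have e4 : inDeg r z ≤ A.card + Sin1.card := by
    have hI : (Sin1.image l.get).card = Sin1.card := Finset.card_image_of_injective _ hgetinj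
    have hsub : Finset.univ.filter (fun v => r v z) ⊆ A ∪ Sin1.image l.get := by
      intro x hx'
      rw [Finset.mem_filter] at hx'
      have hr := hx'.2
      by_cases hmem : x ∈ l.toFinset
      · obtain ⟨q, hq⟩ := List.mem_iff_get.1 (List.mem_toFinset.1 hmem)
        refine Finset.mem_union_right _ (Finset.mem_image.2 ⟨q, ?_, hq⟩)
        rw [hSin1, Finset.mem_filter]
        exact ⟨Finset.mem_univ _, hq ▸ hr⟩
      · apply Finset.mem_union_left
        rw [hA, Finset.mem_filter]
        refine ⟨Finset.mem_univ _, hmem, ?_⟩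
        have hnz : ¬ ∃ y ∈ l, r y x := by
          intro hex
          exact tourn_asymm hT hr (last_to_hybrid hT hl hne hmem hex h0lt)
        intro y hy
        refine tourn_flip hT (fun hh => hmem ((hh.symm) ▸ List.mem_toFinset.2 hy)) ?_
        exact fun hrxy => hnz ⟨y, hy, hrxy⟩
    calc inDeg r z ≤ (A ∪ Sin1.image l.get).card := Finset.card_le_card hsub
      _ ≤ A.card + (Sin1.image l.get).card := Finset.card_union_le _ _
      _ = A.card + Sin1.card := by rw [hI]
  have h1 := hi.1 u0
  have h2 := hi.1 z
  omega
end

section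
/- Let T be a tournament on n vertices, W ⊆ V(T), and define the surplus s(W) = Σ over unordered pairs {u,v} ⊆ W of (p₂(u,v) + p₂(v,u) − 2π₂(T)). Then s(W) ≥ C(|W|,2) − ⌊|W|/2⌋·⌈|W|/2⌉. -/
open Finset

variable {V : Type*} [Fintype V] [DecidableEq V]

/-- Out-degree identity: `d⁺(u) = p₂(u,v) + |{w : u→w, v→w}| + [u→v]`. -/
lemma deg_identity_aux (r : V → V → Prop) [DecidableRel r] (hT : IsTournament r)
    (u v : V) (huv : u ≠ v) :
    p2 r u v + (Finset.univ.filter fun w => r u w ∧ r v w).card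
      + (if r u v then 1 else 0) = outDeg r u := by
  classical
  obtain ⟨hirr, hx⟩ := hT
  have hsplit : (Finset.univ.filter fun w => r u w)
      = (Finset.univ.filter fun w => r u w ∧ r w v)
        ∪ ((Finset.univ.filter fun w => r u w ∧ r v w)
        ∪ (Finset.univ.filter fun w => r u w ∧ w = v)) := by
    ext w
    simp only [mem_filter, mem_univ, true_and, mem_union]
    constructor
    · intro h
      by_cases hwv : w = v
      · exact Or.inr (Or.inr ⟨h, hwv⟩)
      · rcases hx w v hwv with ⟨h1, h2⟩ | ⟨h1, h2⟩
        · exact Or.inl ⟨h, h1⟩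
        · exact Or.inr (Or.inl ⟨h, h1⟩)
    · rintro (⟨h, _⟩ | ⟨h, _⟩ | ⟨h, _⟩) <;> exact h
  have hd1 : Disjoint (Finset.univ.filter fun w => r u w ∧ r w v)
      ((Finset.univ.filter fun w => r u w ∧ r v w)
        ∪ (Finset.univ.filter fun w => r u w ∧ w = v)) := by
    simp only [disjoint_left, mem_filter, mem_univ, true_and, mem_union]
    rintro w ⟨_, hwv⟩ (⟨_, hvw⟩ | ⟨_, heq⟩)
    · rcases hx w v (fun h => hirr v (h ▸ hwv)) with ⟨_, h2⟩ | ⟨_, h2⟩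
      · exact h2 hvw
      · exact h2 hwv
    · exact hirr v (heq ▸ hwv)
  have hd2 : Disjoint (Finset.univ.filter fun w => r u w ∧ r v w)
      (Finset.univ.filter fun w => r u w ∧ w = v) := by
    simp only [disjoint_left, mem_filter, mem_univ, true_and]
    rintro w ⟨_, hvw⟩ ⟨_, heq⟩
    exact hirr v (heq ▸ hvw)
  have hlast : (Finset.univ.filter fun w => r u w ∧ w = v).card
      = (if r u v then 1 else 0) := by
    split_ifs with h
    · rw [show (Finset.univ.filter fun w => r u w ∧ w = v) = {v} by
        ext w; simp only [mem_filter, mem_univ, true_and, mem_singleton]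
        constructor
        · rintro ⟨_, rfl⟩; rfl
        · rintro rfl; exact ⟨h, rfl⟩]
      simp
    · rw [show (Finset.univ.filter fun w => r u w ∧ w = v) = ∅ by
        ext w; simp only [mem_filter, mem_univ, true_and, notMem_empty, iff_false]
        rintro ⟨h1, rfl⟩; exact h h1]
      simp
  rw [outDeg, hsplit, card_union_of_disjoint hd1, card_union_of_disjoint hd2, hlast]
  unfold p2
  omega

/-- For distinct vertices with out-degrees of equal parity, the two-path surplus is positive. -/
lemma pair_key_aux (r : V → V → Prop) [DecidableRel r] (hT : IsTournament r)
    {π : ℕ} (hπ : IsPi2 r π) (u v : V) (huv : u ≠ v)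
    (hpar : outDeg r u % 2 = outDeg r v % 2) :
    2 * π + 1 ≤ p2 r u v + p2 r v u := by
  have h1 := deg_identity_aux r hT u v huv
  have h2 := deg_identity_aux r hT v u huv.symm
  have hC : (Finset.univ.filter fun w => r v w ∧ r u w).card
      = (Finset.univ.filter fun w => r u w ∧ r v w).card := by
    congr 1; ext w; simp only [mem_filter, mem_univ, true_and]; tauto
  rw [hC] at h2
  have hp1 := hπ.1 u v huv
  have hp2 := hπ.1 v u huv.symm
  rcases hT.2 u v huv with ⟨h, h'⟩ | ⟨h, h'⟩ <;>
    simp only [h, h', if_true, if_false] at h1 h2 <;> omega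

lemma sum_offDiag_swap_aux (W : Finset V) (f : V → V → ℤ) :
    ∑ p ∈ W.offDiag, f p.1 p.2 = ∑ p ∈ W.offDiag, f p.2 p.1 := by
  refine Finset.sum_nbij' (i := Prod.swap) (j := Prod.swap) ?_ ?_ ?_ ?_ ?_ <;>
    simp +contextual [Finset.mem_offDiag, ne_comm, and_comm]

lemma prod_le_half_aux (a b : ℕ) : a * b ≤ (a + b) / 2 * ((a + b + 1) / 2) := by
  rcases Nat.even_or_odd (a + b) with ⟨m, hm⟩ | ⟨m, hm⟩
  · have h1 : (a + b) / 2 = m := by omega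
    have h2 : (a + b + 1) / 2 = m := by omega
    rw [h1, h2]; zify; nlinarith [sq_nonneg ((a : ℤ) - b)]
  · have h1 : (a + b) / 2 = m := by omega
    have h2 : (a + b + 1) / 2 = m + 1 := by omega
    rw [h1, h2]; zify; nlinarith [sq_nonneg ((a : ℤ) - b)]

lemma two_choose_aux (k : ℕ) : 2 * Nat.choose k 2 = k * k - k := by
  rw [Nat.choose_two_right]
  have he : 2 ∣ k * (k - 1) := by
    rcases Nat.even_or_odd k with ⟨m, hm⟩ | ⟨m, hm⟩
    · exact Dvd.dvd.mul_right (by omega) _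
    · have h : k - 1 = 2 * m := by omega
      rw [h]; exact Dvd.dvd.mul_left (by omega) _
  have ht : k * (k - 1) = k * k - k := by
    cases k with
    | zero => rfl
    | succ n => rw [Nat.succ_sub_one, Nat.mul_succ]; omega
  omega

lemma bad_card_aux (r : V → V → Prop) [DecidableRel r] (W : Finset V) :
    (W.offDiag.filter fun p => ¬ outDeg r p.1 % 2 = outDeg r p.2 % 2).card ≤
      2 * (W.card / 2 * ((W.card + 1) / 2)) := by
  set A := W.filter fun v => outDeg r v % 2 = 0 with hA
  set B := W.filter fun v => ¬ outDeg r v % 2 = 0 with hB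
  have hab : A.card + B.card = W.card :=
    Finset.card_filter_add_card_filter_not _
  have hsub : (W.offDiag.filter fun p => ¬ outDeg r p.1 % 2 = outDeg r p.2 % 2)
      ⊆ A ×ˢ B ∪ B ×ˢ A := by
    intro p hp
    simp only [mem_filter, mem_offDiag] at hp
    simp only [mem_union, mem_product, hA, hB, mem_filter]
    obtain ⟨⟨h1, h2, _⟩, h3⟩ := hp
    by_cases h : outDeg r p.1 % 2 = 0
    · left; exact ⟨⟨h1, h⟩, h2, by omega⟩
    · right; exact ⟨⟨h1, h⟩, h2, by omega⟩
  have hm : A.card * B.card ≤ W.card / 2 * ((W.card + 1) / 2) := by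
    have := prod_le_half_aux A.card B.card
    rwa [hab] at this
  calc (W.offDiag.filter fun p => ¬ outDeg r p.1 % 2 = outDeg r p.2 % 2).card
      ≤ (A ×ˢ B ∪ B ×ˢ A).card := card_le_card hsub
    _ ≤ A.card * B.card + B.card * A.card := by
        refine le_trans (card_union_le _ _) ?_; simp [card_product]
    _ = 2 * (A.card * B.card) := by ring
    _ ≤ 2 * (W.card / 2 * ((W.card + 1) / 2)) := by omega

theorem stmt12 (r : V → V → Prop) [DecidableRel r] (hT : IsTournament r)
    (π : ℕ) (hπ : IsPi2 r π) (W : Finset V) :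
    (Nat.choose W.card 2 : ℤ) - (W.card / 2 : ℕ) * ((W.card + 1) / 2 : ℕ) ≤
      ∑ p ∈ W.offDiag, ((p2 r p.1 p.2 : ℤ) - π) := by
  classical
  set S := ∑ p ∈ W.offDiag, ((p2 r p.1 p.2 : ℤ) - π) with hS
  have h2S : 2 * S = ∑ p ∈ W.offDiag,
      ((p2 r p.1 p.2 : ℤ) + (p2 r p.2 p.1 : ℤ) - 2 * π) := by
    rw [two_mul, hS]
    nth_rewrite 2 [sum_offDiag_swap_aux W (fun x y => (p2 r x y : ℤ) - π)]
    rw [← Finset.sum_add_distrib]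
    exact Finset.sum_congr rfl fun p _ => by ring
  have hterm : ∀ p ∈ W.offDiag,
      (if outDeg r p.1 % 2 = outDeg r p.2 % 2 then (1 : ℤ) else 0)
        ≤ (p2 r p.1 p.2 : ℤ) + (p2 r p.2 p.1 : ℤ) - 2 * π := by
    intro p hp
    rw [mem_offDiag] at hp
    split_ifs with h
    · have := pair_key_aux r hT hπ p.1 p.2 hp.2.2 h
      omega
    · have h1 := hπ.1 p.1 p.2 hp.2.2
      have h2 := hπ.1 p.2 p.1 (Ne.symm hp.2.2)
      omega
  have hsum : ∑ p ∈ W.offDiag,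
      (if outDeg r p.1 % 2 = outDeg r p.2 % 2 then (1 : ℤ) else 0) ≤ 2 * S := by
    rw [h2S]; exact Finset.sum_le_sum hterm
  have hboole : ∑ p ∈ W.offDiag,
      (if outDeg r p.1 % 2 = outDeg r p.2 % 2 then (1 : ℤ) else 0)
      = ((W.offDiag.filter fun p => outDeg r p.1 % 2 = outDeg r p.2 % 2).card : ℤ) := by
    rw [Finset.sum_boole]
  have hgoodbad : (W.offDiag.filter fun p => outDeg r p.1 % 2 = outDeg r p.2 % 2).card
      + (W.offDiag.filter fun p => ¬ outDeg r p.1 % 2 = outDeg r p.2 % 2).card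
      = W.offDiag.card := Finset.card_filter_add_card_filter_not _
  have hbad := bad_card_aux r W
  have hoff : W.offDiag.card = W.card * W.card - W.card := Finset.offDiag_card W
  have hchoose := two_choose_aux W.card
  have hgood : 2 * Nat.choose W.card 2 ≤
      (W.offDiag.filter fun p => outDeg r p.1 % 2 = outDeg r p.2 % 2).card
      + 2 * (W.card / 2 * ((W.card + 1) / 2)) := by omega
  have hg2 : (2 * (Nat.choose W.card 2) : ℤ) ≤
      ((W.offDiag.filter fun p => outDeg r p.1 % 2 = outDeg r p.2 % 2).card : ℤ)
      + 2 * ((W.card / 2 : ℕ) * ((W.card + 1) / 2 : ℕ)) := by exact_mod_cast hgood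
  rw [hboole] at hsum
  push_cast at hg2 ⊢
  linarith
end
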